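/- arXiv:2110.14724 — 3 statements merged into one kernel-verified Lean document; each statement's English description precedes it below -/
import Mathlib

section
/- In a finite concurrent reachability game with value vector m (the least fixed point of Δ), let G ⊆ Q be a set of states such that no state of Q∖G has value 0 (i.e. (Q∖G) ∩ m⁻¹[0] = ∅), and let ε > 0. Then there exists a valuation v ∈ [0,1]^Q such that v ⪯ m, ‖m − v‖_∞ ≤ ε, v agrees with m on G, and for every q ∈ Q∖G, Δ(v)(q) = val_{⟨F_q, μ_v⟩} > v(q). -/
open scoped BigOperators Classical

noncomputable section

/-- A probability distribution on a finite type. -/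
def FDist (X : Type) [Fintype X] : Type :=
  { p : X → ℝ // (∀ x, 0 ≤ p x) ∧ ∑ x, p x = 1 }

namespace CRG

variable {A B Q D : Type} [Fintype A] [Fintype B] [Fintype Q] [Fintype D]

/-- The support of a distribution. -/
def supp {X : Type} [Fintype X] (σ : FDist X) : Set X := { x | σ.1 x ≠ 0 }

/-- The Dirac distribution. -/
def dirac {X : Type} [Fintype X] [DecidableEq X] (x : X) : FDist X :=
  ⟨fun y => if y = x then 1 else 0, by
    constructor
    · intro y
      dsimp only
      split <;> norm_num
    · simp⟩

/-- Outcome of a pair of mixed strategies in the game in normal form with payoff `u`. -/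
def out (u : A → B → ℝ) (σA : FDist A) (σB : FDist B) : ℝ :=
  ∑ a, ∑ b, σA.1 a * σB.1 b * u a b

/-- Outcome of a mixed strategy of Player A against a pure action of Player B. -/
def outB (u : A → B → ℝ) (σA : FDist A) (b : B) : ℝ :=
  ∑ a, σA.1 a * u a b

/-- The value of a Player A mixed strategy in a game in normal form. -/
def valStratGF (u : A → B → ℝ) (σA : FDist A) : ℝ :=
  ⨅ σB : FDist B, out u σA σB

/-- The (von Neumann) value of a finite game in normal form. -/
def valGF (u : A → B → ℝ) : ℝ :=
  ⨆ σA : FDist A, valStratGF u σA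

/-- The optimal Player A mixed strategies in a game in normal form. -/
def OptA (u : A → B → ℝ) : Set (FDist A) := { σA | valStratGF u σA = valGF u }

/-- The optimal actions of Player B against the Player A mixed strategy `σA`. -/
def optActs (u : A → B → ℝ) (σA : FDist A) : Set B :=
  { b | outB u σA b = valStratGF u σA }

/-- μ_v : the lift of a valuation of the states to the Nature states. -/
def lift (dist : D → FDist Q) (v : Q → ℝ) (d : D) : ℝ := ∑ q, (dist d).1 q * v q

/-- The payoff function of the local interaction `F_q` valued by `μ_m`. -/
def locPay (δ : Q → A → B → D) (dist : D → FDist Q) (m : Q → ℝ) (q : Q) : A → B → ℝ :=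
  fun a b => lift dist m (δ q a b)

/-- One-step transition probability between states. -/
def step (δ : Q → A → B → D) (dist : D → FDist Q) (σA : FDist A) (σB : FDist B)
    (q q' : Q) : ℝ :=
  ∑ a, ∑ b, σA.1 a * σB.1 b * (dist (δ q a b)).1 q'

/-- The operator Δ on valuations of the states. -/
def Δop (δ : Q → A → B → D) (dist : D → FDist Q) (T : Q) (v : Q → ℝ) : Q → ℝ :=
  fun q => if q = T then 1 else valGF (fun a b => lift dist v (δ q a b))

/-- The target `T` is an absorbing (self-looping) sink. -/
def Absorbing (δ : Q → A → B → D) (dist : D → FDist Q) (T : Q) : Prop :=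
  ∀ a b, (dist (δ T a b)).1 = fun q => if q = T then 1 else 0

/-- `m` is the least fixed point of Δ on `[0,1]^Q`. -/
def IsLfpDelta (δ : Q → A → B → D) (dist : D → FDist Q) (T : Q) (m : Q → ℝ) : Prop :=
  (∀ q, m q ∈ Set.Icc (0:ℝ) 1) ∧ Δop δ dist T m = m ∧
    ∀ v : Q → ℝ, (∀ q, v q ∈ Set.Icc (0:ℝ) 1) → Δop δ dist T v = v → ∀ q, m q ≤ v q

/-- A strategy: a history of past states together with the current state gives a
mixed action.  (This encodes maps `Q⁺ → 𝒟(X)`.) -/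
def Strat (Q X : Type) [Fintype X] : Type := List Q → Q → FDist X

/-- Residual strategy after the history `π` has been played. -/
def residual {X : Type} [Fintype X] (s : Strat Q X) (π : List Q) : Strat Q X :=
  fun h q => s (π ++ h) q

/-- The (positional) strategy associated with a per-state choice of mixed actions. -/
def ofPos {X : Type} [Fintype X] (s : Q → FDist X) : Strat Q X := fun _ q => s q

/-- Probability of reaching the set `S` within `n` steps from current state `q`,
history `h` having been played. -/
def reachSetNAux (δ : Q → A → B → D) (dist : D → FDist Q) (S : Set Q) :
    ℕ → Strat Q A → Strat Q B → List Q → Q → ℝ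
  | 0, _, _, _, q => if q ∈ S then 1 else 0
  | n + 1, sA, sB, h, q =>
      if q ∈ S then 1
      else ∑ q', step δ dist (sA h q) (sB h q) q q' *
        reachSetNAux δ dist S n sA sB (h ++ [q]) q'

/-- Probability of reaching the set `S` within `n` steps from state `q`. -/
def reachSetN (δ : Q → A → B → D) (dist : D → FDist Q) (S : Set Q) (n : ℕ)
    (sA : Strat Q A) (sB : Strat Q B) (q : Q) : ℝ :=
  reachSetNAux δ dist S n sA sB [] q

/-- Probability of reaching the target `T` within `n` steps from state `q`. -/
def reachN (δ : Q → A → B → D) (dist : D → FDist Q) (T : Q) (n : ℕ)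
    (sA : Strat Q A) (sB : Strat Q B) (q : Q) : ℝ :=
  reachSetN δ dist {T} n sA sB q

/-- Probability of eventually reaching the target `T` from state `q`. -/
def reach (δ : Q → A → B → D) (dist : D → FDist Q) (T : Q)
    (sA : Strat Q A) (sB : Strat Q B) (q : Q) : ℝ :=
  ⨆ n : ℕ, reachN δ dist T n sA sB q

/-- The value of a Player A strategy from state `q`. -/
def valA (δ : Q → A → B → D) (dist : D → FDist Q) (T : Q) (sA : Strat Q A) (q : Q) : ℝ :=
  ⨅ sB : Strat Q B, reach δ dist T sA sB q

/-- The value of the game from state `q`. -/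
def value (δ : Q → A → B → D) (dist : D → FDist Q) (T : Q) (q : Q) : ℝ :=
  ⨆ sA : Strat Q A, valA δ dist T sA q

/-- A state is maximizable when Player A has an optimal strategy from it. -/
def Maximizable (δ : Q → A → B → D) (dist : D → FDist Q) (T q : Q) : Prop :=
  ∃ sA : Strat Q A, valA δ dist T sA q = value δ dist T q

/-- A positional Player A strategy locally dominates the valuation `v`. -/
def LocallyDominates (δ : Q → A → B → D) (dist : D → FDist Q)
    (sA : Q → FDist A) (v : Q → ℝ) : Prop :=
  ∀ q, v q ≤ valStratGF (fun a b => lift dist v (δ q a b)) (sA q)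

/-- Transition function ι of the MDP induced by a positional Player A strategy. -/
def stepB [DecidableEq B] (δ : Q → A → B → D) (dist : D → FDist Q)
    (sA : Q → FDist A) (q : Q) (b : B) (q' : Q) : ℝ :=
  step δ dist (sA q) (dirac b) q q'

/-- An end component of the MDP induced by the positional Player A strategy `sA`. -/
structure EndComp [DecidableEq B] (δ : Q → A → B → D) (dist : D → FDist Q)
    (sA : Q → FDist A) where
  states : Set Q
  acts : Q → Set B
  acts_nonempty : ∀ q ∈ states, (acts q).Nonempty
  closed : ∀ q ∈ states, ∀ b ∈ acts q, ∀ q', stepB δ dist sA q b q' ≠ 0 → q' ∈ states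
  connected : ∀ q ∈ states, ∀ q' ∈ states,
    Relation.ReflTransGen
      (fun x y => x ∈ states ∧ ∃ b ∈ acts x, stepB δ dist sA x b y ≠ 0) q q'

/-- `S_D` : the Nature states having a non-zero probability to reach `S`. -/
def natS (dist : D → FDist Q) (S : Set Q) : Set D :=
  { d | ∃ q ∈ S, (dist d).1 q ≠ 0 }

/-- Progressive optimal local strategies at `q` w.r.t. the set `Gd`. -/
def Prog (δ : Q → A → B → D) (dist : D → FDist Q) (m : Q → ℝ) (q : Q)
    (Gd : Set Q) : Set (FDist A) :=
  { σA | σA ∈ OptA (locPay δ dist m q) ∧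
      ∀ b ∈ optActs (locPay δ dist m q) σA, ∃ a ∈ supp σA, δ q a b ∈ natS dist Gd }

/-- Risky optimal local strategies at `q` w.r.t. the set `Bd`. -/
def Risk (δ : Q → A → B → D) (dist : D → FDist Q) (m : Q → ℝ) (q : Q)
    (Bd : Set Q) : Set (FDist A) :=
  { σA | σA ∈ OptA (locPay δ dist m q) ∧
      ∃ b ∈ optActs (locPay δ dist m q) σA, ∃ a ∈ supp σA, δ q a b ∈ natS dist Bd }

/-- Efficient local strategies: progressive and not risky. -/
def Eff (δ : Q → A → B → D) (dist : D → FDist Q) (m : Q → ℝ) (q : Q)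
    (Gd Bd : Set Q) : Set (FDist A) :=
  Prog δ dist m q Gd \ Risk δ dist m q Bd

/-- The increasing sequence of sets of secure states w.r.t. `Bd`. -/
def SecN (δ : Q → A → B → D) (dist : D → FDist Q) (m : Q → ℝ) (T : Q) (Bd : Set Q) :
    ℕ → Set Q
  | 0 => {T}
  | n + 1 => SecN δ dist m T Bd n ∪
      { q | q ∉ Bd ∧ (Eff δ dist m q (SecN δ dist m T Bd n) Bd).Nonempty }

/-- The set of secure states w.r.t. `Bd`. -/
def Sec (δ : Q → A → B → D) (dist : D → FDist Q) (m : Q → ℝ) (T : Q) (Bd : Set Q) :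
    Set Q :=
  (⋃ n : ℕ, SecN δ dist m T Bd n) ∪ { q | m q = 0 }

/-- The sequence of sets of bad states. -/
def BadN (δ : Q → A → B → D) (dist : D → FDist Q) (m : Q → ℝ) (T : Q) : ℕ → Set Q
  | 0 => ∅
  | n + 1 => (Sec δ dist m T (BadN δ dist m T n))ᶜ

/-- The set of bad states. -/
def Bad (δ : Q → A → B → D) (dist : D → FDist Q) (m : Q → ℝ) (T : Q) : Set Q :=
  BadN δ dist m T (Fintype.card Q)

/-- `α[y]` : the total valuation extending the partial valuation `α : O∖E → [0,1]`
with the value `y` on `E`. -/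
def extendVal {O : Type} (E : Set O) (α : O → ℝ) (y : ℝ) : O → ℝ :=
  fun o => if o ∈ E then y else α o

/-- The map `f_α : y ↦ val_{⟨F, α[y]⟩}`. -/
def fval {O : Type} (ρ : A → B → O) (E : Set O) (α : O → ℝ) (y : ℝ) : ℝ :=
  valGF (fun a b => extendVal E α y (ρ a b))

/-- `v` is the least fixed point of `f_α` on `[0,1]`. -/
def IsLfpVal {O : Type} (ρ : A → B → O) (E : Set O) (α : O → ℝ) (v : ℝ) : Prop :=
  v ∈ Set.Icc (0:ℝ) 1 ∧ fval ρ E α v = v ∧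
    ∀ y ∈ Set.Icc (0:ℝ) 1, fval ρ E α y = y → v ≤ y

/-- The game form `ρ` is reach-maximizable w.r.t. the partial valuation `α : O∖E → [0,1]`. -/
def RMwrt {O : Type} (ρ : A → B → O) (E : Set O) (α : O → ℝ) : Prop :=
  ∀ v : ℝ, IsLfpVal ρ E α v →
    v = 0 ∨
      ∃ σA ∈ OptA (fun a b => extendVal E α v (ρ a b)),
        ∀ b ∈ optActs (fun a b => extendVal E α v (ρ a b)) σA,
          ∃ a ∈ supp σA, ρ a b ∉ E

/-- A reach-maximizable game form: RM w.r.t. every partial valuation of its outcomes. -/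
def RMform {O : Type} (ρ : A → B → O) : Prop :=
  ∀ (E : Set O) (α : O → ℝ), (∀ o ∉ E, α o ∈ Set.Icc (0:ℝ) 1) → RMwrt ρ E α

/-- A determined game form. -/
def Determined {O : Type} (ρ : A → B → O) : Prop :=
  ∀ E : Set O, (∃ a, ∀ b, ρ a b ∈ E) ∨ (∃ b, ∀ a, ρ a b ∉ E)

/-- Transition function of the three-state reachability game `C_{(F,α)}`:
state `0` is `q₀`, state `1` is the target `⊤`, state `2` is the bin `⊥`. -/
def triδ {O : Type} (ρ : A → B → O) (E : Set O) :
    Fin 3 → A → B → (Fin 3 ⊕ {o : O // o ∉ E}) :=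
  fun s a b =>
    if s = 0 then
      if h : ρ a b ∈ E then Sum.inl 0 else Sum.inr ⟨ρ a b, h⟩
    else Sum.inl s

/-- Nature distributions of the three-state reachability game `C_{(F,α)}`. -/
def triDist {O : Type} (E : Set O) (α : O → ℝ)
    (hα : ∀ o ∉ E, α o ∈ Set.Icc (0:ℝ) 1) :
    (Fin 3 ⊕ {o : O // o ∉ E}) → FDist (Fin 3) := fun d =>
  match d with
  | Sum.inl t => dirac t
  | Sum.inr x =>
      ⟨![0, α x.1, 1 - α x.1], by
        obtain ⟨h0, h1⟩ := hα x.1 x.2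
        constructor
        · intro s
          fin_cases s <;> simp <;> linarith
        · simp [Fin.sum_univ_three]⟩

/-- An abstract (finite) game form with actions `A` and `B`. -/
structure GameForm (A B : Type) where
  O : Type
  fin : Fintype O
  ρ : A → B → O

/-- All local interactions of the arena `δ` belong to the set `𝒢` of game forms
(up to a renaming of the outcomes into Nature states). -/
def UsesForms {Q D : Type} (𝒢 : Set (GameForm A B)) (δ : Q → A → B → D) : Prop :=
  ∀ q, ∃ F ∈ 𝒢, ∃ g : F.O → D, δ q = fun a b => g (F.ρ a b)

/-- The sequence of iterates of Δ starting from the valuation `1_{⊤}`. -/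
def vseq (δ : Q → A → B → D) (dist : D → FDist Q) (T : Q) : ℕ → Q → ℝ
  | 0 => fun q => if q = T then 1 else 0
  | n + 1 => Δop δ dist T (vseq δ dist T n)

/-- Relevant paths w.r.t. the strategy `sA` from the state `q₀`: the pair `(h, q)`
encodes the path `h · q` (history `h`, current state `q`). -/
inductive Relevant [DecidableEq B] (δ : Q → A → B → D) (dist : D → FDist Q)
    (m : Q → ℝ) (sA : Strat Q A) (q₀ : Q) : List Q → Q → Prop
  | base : Relevant δ dist m sA q₀ [] q₀
  | step {h : List Q} {q q' : Q} :
      Relevant δ dist m sA q₀ h q →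
      (∃ b ∈ optActs (locPay δ dist m q) (sA h q),
        0 < CRG.step δ dist (sA h q) (dirac b) q q') →
      Relevant δ dist m sA q₀ (h ++ [q]) q'

end CRG

namespace Stmt14Aux

open CRG Finset

variable {A B Q D : Type} [Fintype A] [Fintype B] [Fintype Q] [Fintype D]

noncomputable instance {X : Type} [Fintype X] [Nonempty X] : Nonempty (FDist X) :=
  ⟨CRG.dirac (Classical.arbitrary X)⟩

lemma FDist.sum_mul_const {X : Type} [Fintype X] (σ : FDist X) (c : ℝ) :
    ∑ x, σ.1 x * c = c := by
  rw [← Finset.sum_mul, σ.2.2, one_mul]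

variable [Nonempty A] [Nonempty B]

lemma out_le_out_add {u u' : A → B → ℝ} {c : ℝ} (h : ∀ a b, u a b ≤ u' a b + c)
    (σA : FDist A) (σB : FDist B) :
    CRG.out u σA σB ≤ CRG.out u' σA σB + c := by
  unfold CRG.out
  have key : ∀ a : A, ∑ b, σA.1 a * σB.1 b * u a b ≤
      (∑ b, σA.1 a * σB.1 b * u' a b) + σA.1 a * c := by
    intro a
    have : ∀ b : B, σA.1 a * σB.1 b * u a b ≤
        σA.1 a * σB.1 b * u' a b + σA.1 a * (σB.1 b * c) := by
      intro b
      have hnn : 0 ≤ σA.1 a * σB.1 b := mul_nonneg (σA.2.1 a) (σB.2.1 b)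
      nlinarith [mul_le_mul_of_nonneg_left (h a b) hnn]
    calc ∑ b, σA.1 a * σB.1 b * u a b
        ≤ ∑ b, (σA.1 a * σB.1 b * u' a b + σA.1 a * (σB.1 b * c)) :=
          Finset.sum_le_sum fun b _ => this b
      _ = (∑ b, σA.1 a * σB.1 b * u' a b) + σA.1 a * ∑ b, σB.1 b * c := by
          rw [Finset.sum_add_distrib, Finset.mul_sum]
      _ = (∑ b, σA.1 a * σB.1 b * u' a b) + σA.1 a * c := by
          rw [FDist.sum_mul_const]
  calc ∑ a, ∑ b, σA.1 a * σB.1 b * u a b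
      ≤ ∑ a, ((∑ b, σA.1 a * σB.1 b * u' a b) + σA.1 a * c) :=
        Finset.sum_le_sum fun a _ => key a
    _ = (∑ a, ∑ b, σA.1 a * σB.1 b * u' a b) + c := by
        rw [Finset.sum_add_distrib, FDist.sum_mul_const]

lemma out_const (c : ℝ) (σA : FDist A) (σB : FDist B) :
    CRG.out (fun _ _ => c) σA σB = c := by
  unfold CRG.out
  have : ∀ a : A, ∑ b, σA.1 a * σB.1 b * c = σA.1 a * c := by
    intro a
    calc ∑ b, σA.1 a * σB.1 b * c = σA.1 a * ∑ b, σB.1 b * c := by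
          rw [Finset.mul_sum]; congr 1; ext b; ring
      _ = σA.1 a * c := by rw [FDist.sum_mul_const]
  rw [Finset.sum_congr rfl fun a _ => this a, FDist.sum_mul_const]

lemma out_le {u : A → B → ℝ} {c : ℝ} (h : ∀ a b, u a b ≤ c)
    (σA : FDist A) (σB : FDist B) : CRG.out u σA σB ≤ c := by
  have := out_le_out_add (u' := fun _ _ => (0:ℝ)) (c := c)
    (fun a b => by simpa using h a b) σA σB
  simpa [out_const] using this

lemma le_out {u : A → B → ℝ} {c : ℝ} (h : ∀ a b, c ≤ u a b)
    (σA : FDist A) (σB : FDist B) : c ≤ CRG.out u σA σB := by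
  have := out_le_out_add (u := fun _ _ => c) (u' := u) (c := 0)
    (fun a b => by simpa using h a b) σA σB
  simpa [out_const] using this

lemma out_smul (c : ℝ) (u : A → B → ℝ) (σA : FDist A) (σB : FDist B) :
    CRG.out (fun a b => c * u a b) σA σB = c * CRG.out u σA σB := by
  unfold CRG.out
  rw [Finset.mul_sum]
  refine Finset.sum_congr rfl fun a _ => ?_
  rw [Finset.mul_sum]
  exact Finset.sum_congr rfl fun b _ => by ring

/-- lower bound on payoffs -/
def lo (u : A → B → ℝ) : ℝ :=
  (Finset.univ : Finset (A × B)).inf' (by simp) fun p => u p.1 p.2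

lemma lo_le (u : A → B → ℝ) (a : A) (b : B) : lo u ≤ u a b := by
  have h := Finset.inf'_le (fun p : A × B => u p.1 p.2) (Finset.mem_univ (a, b))
  exact h

def hi (u : A → B → ℝ) : ℝ :=
  (Finset.univ : Finset (A × B)).sup' (by simp) fun p => u p.1 p.2

lemma le_hi (u : A → B → ℝ) (a : A) (b : B) : u a b ≤ hi u := by
  have h := Finset.le_sup' (fun p : A × B => u p.1 p.2) (Finset.mem_univ (a, b))
  exact h

lemma bddBelow_out (u : A → B → ℝ) (σA : FDist A) :
    BddBelow (Set.range fun σB => CRG.out u σA σB) := by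
  refine ⟨lo u, ?_⟩
  rintro x ⟨σB, rfl⟩
  exact le_out (fun a b => lo_le u a b) σA σB

lemma valStratGF_le_out (u : A → B → ℝ) (σA : FDist A) (σB : FDist B) :
    CRG.valStratGF u σA ≤ CRG.out u σA σB :=
  ciInf_le (bddBelow_out u σA) σB

lemma le_valStratGF {u : A → B → ℝ} {c : ℝ} (σA : FDist A)
    (h : ∀ σB, c ≤ CRG.out u σA σB) : c ≤ CRG.valStratGF u σA :=
  le_ciInf h

lemma bddAbove_valStrat (u : A → B → ℝ) :
    BddAbove (Set.range fun σA => CRG.valStratGF u σA) := by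
  refine ⟨hi u, ?_⟩
  rintro x ⟨σA, rfl⟩
  exact (valStratGF_le_out u σA (Classical.arbitrary _)).trans
    (out_le (fun a b => le_hi u a b) σA _)

lemma valStratGF_le_valGF (u : A → B → ℝ) (σA : FDist A) :
    CRG.valStratGF u σA ≤ CRG.valGF u :=
  le_ciSup (bddAbove_valStrat u) σA

lemma valGF_le {u : A → B → ℝ} {c : ℝ} (h : ∀ a b, u a b ≤ c) :
    CRG.valGF u ≤ c :=
  ciSup_le fun σA => (valStratGF_le_out u σA (Classical.arbitrary _)).trans
    (out_le h σA _)

lemma le_valGF {u : A → B → ℝ} {c : ℝ} (h : ∀ a b, c ≤ u a b) :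
    c ≤ CRG.valGF u :=
  le_trans (le_valStratGF (Classical.arbitrary _) fun σB => le_out h _ σB)
    (valStratGF_le_valGF u _)

lemma valGF_le_valGF_add {u u' : A → B → ℝ} {c : ℝ}
    (h : ∀ a b, u a b ≤ u' a b + c) :
    CRG.valGF u ≤ CRG.valGF u' + c := by
  refine ciSup_le fun σA => ?_
  have h1 : CRG.valStratGF u σA ≤ CRG.valStratGF u' σA + c := by
    rw [← sub_le_iff_le_add]
    refine le_valStratGF σA fun σB => ?_
    have := (valStratGF_le_out u σA σB).trans (out_le_out_add h σA σB)
    linarith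
  exact h1.trans (add_le_add (valStratGF_le_valGF u' σA) le_rfl)

lemma valGF_mono {u u' : A → B → ℝ} (h : ∀ a b, u a b ≤ u' a b) :
    CRG.valGF u ≤ CRG.valGF u' := by
  have := valGF_le_valGF_add (u := u) (u' := u') (c := 0)
    (fun a b => by simpa using h a b)
  simpa using this

lemma smul_valGF_le {u : A → B → ℝ} {c : ℝ} (hc : 0 ≤ c) :
    c * CRG.valGF u ≤ CRG.valGF (fun a b => c * u a b) := by
  rcases eq_or_lt_of_le hc with rfl | hc'
  · rw [zero_mul]
    exact le_valGF fun a b => by simp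
  · rw [mul_comm c (CRG.valGF u), ← le_div_iff₀ hc']
    refine ciSup_le fun σA => ?_
    rw [le_div_iff₀ hc', mul_comm (CRG.valStratGF u σA) c]
    have h1 : c * CRG.valStratGF u σA ≤ CRG.valStratGF (fun a b => c * u a b) σA := by
      refine le_valStratGF σA fun σB => ?_
      rw [out_smul]
      exact mul_le_mul_of_nonneg_left (valStratGF_le_out u σA σB) hc
    exact h1.trans (valStratGF_le_valGF _ σA)

-- lift lemmas
lemma lift_le_lift_add {dist : D → FDist Q} {w w' : Q → ℝ} {c : ℝ}
    (h : ∀ q, w q ≤ w' q + c) (d : D) :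
    CRG.lift dist w d ≤ CRG.lift dist w' d + c := by
  unfold CRG.lift
  calc ∑ q, (dist d).1 q * w q ≤ ∑ q, ((dist d).1 q * w' q + (dist d).1 q * c) := by
        refine Finset.sum_le_sum fun q _ => ?_
        nlinarith [mul_le_mul_of_nonneg_left (h q) ((dist d).2.1 q)]
    _ = (∑ q, (dist d).1 q * w' q) + c := by
        rw [Finset.sum_add_distrib, FDist.sum_mul_const]

lemma lift_mono {dist : D → FDist Q} {w w' : Q → ℝ}
    (h : ∀ q, w q ≤ w' q) (d : D) :
    CRG.lift dist w d ≤ CRG.lift dist w' d := by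
  have := lift_le_lift_add (dist := dist) (c := 0) (fun q => by simpa using h q) d
  simpa using this

lemma lift_const {dist : D → FDist Q} (c : ℝ) (d : D) :
    CRG.lift dist (fun _ => c) d = c := FDist.sum_mul_const _ c

lemma lift_smul {dist : D → FDist Q} (c : ℝ) (w : Q → ℝ) (d : D) :
    CRG.lift dist (fun q => c * w q) d = c * CRG.lift dist w d := by
  unfold CRG.lift
  rw [Finset.mul_sum]
  exact Finset.sum_congr rfl fun q _ => by ring

lemma le_lift {dist : D → FDist Q} {w : Q → ℝ} {c : ℝ}
    (h : ∀ q, c ≤ w q) (d : D) : c ≤ CRG.lift dist w d := by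
  have := lift_mono (dist := dist) (w := fun _ => c) (w' := w) h d
  simpa [lift_const] using this

lemma lift_le {dist : D → FDist Q} {w : Q → ℝ} {c : ℝ}
    (h : ∀ q, w q ≤ c) (d : D) : CRG.lift dist w d ≤ c := by
  have := lift_mono (dist := dist) (w := w) (w' := fun _ => c) h d
  simpa [lift_const] using this

-- Δop lemmas
lemma Δop_le_Δop_add {δ : Q → A → B → D} {dist : D → FDist Q} {T : Q}
    {w w' : Q → ℝ} {c : ℝ} (hc : 0 ≤ c) (h : ∀ q, w q ≤ w' q + c) (q : Q) :
    CRG.Δop δ dist T w q ≤ CRG.Δop δ dist T w' q + c := by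
  unfold CRG.Δop
  split
  · linarith
  · exact valGF_le_valGF_add fun a b => lift_le_lift_add h _

lemma Δop_mono {δ : Q → A → B → D} {dist : D → FDist Q} {T : Q}
    {w w' : Q → ℝ} (h : ∀ q, w q ≤ w' q) (q : Q) :
    CRG.Δop δ dist T w q ≤ CRG.Δop δ dist T w' q := by
  have := Δop_le_Δop_add (δ := δ) (dist := dist) (T := T) (c := 0)
    le_rfl (fun q => by simpa using h q) q
  simpa using this

lemma le_Δop {δ : Q → A → B → D} {dist : D → FDist Q} {T : Q}
    {w : Q → ℝ} {c : ℝ} (hc1 : c ≤ 1) (h : ∀ q, c ≤ w q) (q : Q) :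
    c ≤ CRG.Δop δ dist T w q := by
  unfold CRG.Δop
  split
  · exact hc1
  · exact le_valGF fun a b => le_lift h _

lemma Δop_le_one {δ : Q → A → B → D} {dist : D → FDist Q} {T : Q}
    {w : Q → ℝ} (h : ∀ q, w q ≤ 1) (q : Q) :
    CRG.Δop δ dist T w q ≤ 1 := by
  unfold CRG.Δop
  split
  · exact le_refl 1
  · exact valGF_le fun a b => lift_le h _

lemma Δop_T {δ : Q → A → B → D} {dist : D → FDist Q} {T : Q} (w : Q → ℝ) :
    CRG.Δop δ dist T w T = 1 := by simp [CRG.Δop]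

end Stmt14Aux


set_option maxHeartbeats 1000000 in
/-- given `G ⊆ Q` avoiding the value-0 states of its complement and
ε > 0, there is a valuation `v ⪯ m`, ε-close to `m`, agreeing with `m` on `G`, at
which Δ strictly increases outside `G`. -/
theorem stmt14
    {A B Q D : Type} [Fintype A] [Fintype B] [Fintype Q] [Fintype D]
    [Nonempty A] [Nonempty B] [Nonempty Q] [Nonempty D] [DecidableEq Q]
    (δ : Q → A → B → D) (dist : D → FDist Q) (T : Q)
    (habs : CRG.Absorbing δ dist T)
    (m : Q → ℝ) (hm : CRG.IsLfpDelta δ dist T m)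
    (G : Set Q) (hG : ∀ q ∉ G, m q ≠ 0)
    (ε : ℝ) (hε : 0 < ε) :
    ∃ v : Q → ℝ,
      (∀ q, v q ∈ Set.Icc (0:ℝ) 1) ∧ (∀ q, v q ≤ m q) ∧
      (∀ q, |m q - v q| ≤ ε) ∧ (∀ q ∈ G, v q = m q) ∧
      ∀ q ∉ G, v q < CRG.Δop δ dist T v q := by
  classical
  obtain ⟨hm01, hfix, hleast⟩ := hm
  have hm0 : ∀ q, 0 ≤ m q := fun q => (hm01 q).1
  have hm1 : ∀ q, m q ≤ 1 := fun q => (hm01 q).2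
  have hfix' : ∀ q, CRG.Δop δ dist T m q = m q := fun q => congrFun hfix q
  have hmT : m T = 1 := by rw [← hfix' T]; exact Stmt14Aux.Δop_T m
  set V : ℕ → Q → ℝ := CRG.vseq δ dist T with hV
  have hV0T : V 0 T = 1 := by simp [hV, CRG.vseq]
  have hV0' : ∀ q, q ≠ T → V 0 q = 0 := by
    intro q h
    simp [hV, CRG.vseq, h]
  have hVsucc : ∀ n, V (n+1) = CRG.Δop δ dist T (V n) := fun n => rfl
  have hVnonneg : ∀ n q, 0 ≤ V n q := by
    intro n
    induction n with
    | zero =>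
      intro q
      by_cases h : q = T
      · rw [h, hV0T]; norm_num
      · rw [hV0' q h]
    | succ n ih => intro q; rw [hVsucc]; exact Stmt14Aux.le_Δop zero_le_one ih q
  have hVle1 : ∀ n q, V n q ≤ 1 := by
    intro n
    induction n with
    | zero =>
      intro q
      by_cases h : q = T
      · rw [h, hV0T]
      · rw [hV0' q h]; norm_num
    | succ n ih => intro q; rw [hVsucc]; exact Stmt14Aux.Δop_le_one ih q
  have hVlem : ∀ n q, V n q ≤ m q := by
    intro n
    induction n with
    | zero =>
      intro q
      by_cases h : q = T
      · rw [h, hV0T, hmT]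
      · rw [hV0' q h]; exact hm0 q
    | succ n ih =>
      intro q; rw [hVsucc, ← hfix' q]; exact Stmt14Aux.Δop_mono ih q
  have hVT : ∀ n, V n T = 1 := by
    intro n
    cases n with
    | zero => exact hV0T
    | succ n => rw [hVsucc]; exact Stmt14Aux.Δop_T _
  have hVstep : ∀ n q, V n q ≤ V (n+1) q := by
    intro n
    induction n with
    | zero =>
      intro q
      by_cases h : q = T
      · rw [h, hV0T, hVT 1]
      · rw [hV0' q h]; exact hVnonneg 1 q
    | succ n ih =>
      intro q
      rw [hVsucc (n+1), hVsucc n]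
      exact Stmt14Aux.Δop_mono ih q
  have hVmono : ∀ q, Monotone fun n => V n q :=
    fun q => monotone_nat_of_le_succ (fun n => hVstep n q)
  have hbddV : ∀ q, BddAbove (Set.range fun n => V n q) := by
    intro q
    refine ⟨1, ?_⟩
    rintro x ⟨n, rfl⟩
    exact hVle1 n q
  set w : Q → ℝ := fun q => ⨆ n, V n q with hw
  have hVlew : ∀ n q, V n q ≤ w q := fun n q => le_ciSup (hbddV q) n
  have hwlem : ∀ q, w q ≤ m q := fun q => ciSup_le fun n => hVlem n q
  have hw0 : ∀ q, 0 ≤ w q := fun q => le_trans (hVnonneg 0 q) (hVlew 0 q)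
  have hwT : w T = 1 := by
    refine le_antisymm (ciSup_le fun n => hVle1 n T) ?_
    have h := hVlew 0 T
    rw [hVT 0] at h
    exact h
  have hwlt : ∀ q c, c < w q → ∃ n, c < V n q := fun q c hc =>
    (lt_ciSup_iff (hbddV q)).1 hc
  have hwfix : CRG.Δop δ dist T w = w := by
    funext q
    by_cases hqT : q = T
    · rw [hqT, Stmt14Aux.Δop_T, hwT]
    · refine le_antisymm ?_ ?_
      · refine le_of_forall_pos_le_add fun ε' hε' => ?_
        have hex : ∀ q', ∃ n, w q' - ε' < V n q' := by
          intro q'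
          exact hwlt q' _ (by linarith)
        choose nq hnq using hex
        have hNle : ∀ q', w q' ≤ V (Finset.univ.sup nq) q' + ε' := by
          intro q'
          have h1 : V (nq q') q' ≤ V (Finset.univ.sup nq) q' :=
            hVmono q' (Finset.le_sup (Finset.mem_univ q'))
          linarith [hnq q']
        calc CRG.Δop δ dist T w q
            ≤ CRG.Δop δ dist T (V (Finset.univ.sup nq)) q + ε' :=
              Stmt14Aux.Δop_le_Δop_add (le_of_lt hε') hNle q
          _ = V (Finset.univ.sup nq + 1) q + ε' := by rw [hVsucc]
          _ ≤ w q + ε' := add_le_add (hVlew _ q) le_rfl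
      · have hkey : ∀ n, V n q ≤ CRG.Δop δ dist T w q := by
          intro n
          calc V n q ≤ V (n+1) q := hVstep n q
            _ = CRG.Δop δ dist T (V n) q := by rw [hVsucc]
            _ ≤ CRG.Δop δ dist T w q := Stmt14Aux.Δop_mono (fun q' => hVlew n q') q
        exact ciSup_le hkey
  have hmlew : ∀ q, m q ≤ w q :=
    hleast w (fun q' => ⟨hw0 q', (hwlem q').trans (hm1 q')⟩) hwfix
  have hsup : ∀ q c, c < m q → ∃ n, c < V n q := fun q c hc =>
    hwlt q c (lt_of_lt_of_le hc (hmlew q))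
  -- choose N
  have hexN : ∀ q, ∃ n, m q - ε/2 < V n q := fun q => hsup q _ (by linarith)
  choose nq2 hnq2 using hexN
  set N : ℕ := Finset.univ.sup nq2 with hN
  have hNapprox : ∀ q, m q - ε/2 < V N q := fun q =>
    lt_of_lt_of_le (hnq2 q) (hVmono q (Finset.le_sup (Finset.mem_univ q)))
  -- choose lambda
  set lam : ℝ := min (ε/(2*((N:ℝ)+1))) (1/2) with hlam
  have hlam0 : 0 < lam := lt_min (by positivity) (by norm_num)
  have hlam1 : lam < 1 := lt_of_le_of_lt (min_le_right _ _) (by norm_num)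
  have h1lam0 : 0 < 1 - lam := by linarith
  have hlamN : ((N:ℝ)+1) * lam ≤ ε/2 := by
    have h1 : lam ≤ ε/(2*((N:ℝ)+1)) := min_le_left _ _
    have h2 : (0:ℝ) ≤ (N:ℝ)+1 := by positivity
    have hne : ((N:ℝ)+1) ≠ 0 := by positivity
    have h3 : ((N:ℝ)+1)*(ε/(2*((N:ℝ)+1))) = ε/2 := by field_simp
    calc ((N:ℝ)+1)*lam ≤ ((N:ℝ)+1)*(ε/(2*((N:ℝ)+1))) :=
          mul_le_mul_of_nonneg_left h1 h2
      _ = ε/2 := h3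
  -- the contraction
  set Γ : (Q → ℝ) → (Q → ℝ) :=
    fun v q => if q ∈ G then m q else (1 - lam) * CRG.Δop δ dist T v q with hΓdef
  have hΔlip : ∀ (x y : Q → ℝ) (q : Q),
      CRG.Δop δ dist T x q ≤ CRG.Δop δ dist T y q + Dist.dist x y := by
    intro x y q
    refine Stmt14Aux.Δop_le_Δop_add dist_nonneg (fun q' => ?_) q
    have h := dist_le_pi_dist x y q'
    rw [Real.dist_eq] at h
    have h2 := abs_le.mp h
    linarith [h2.2]
  have hΓlip : ∀ x y : Q → ℝ, Dist.dist (Γ x) (Γ y) ≤ (1 - lam) * Dist.dist x y := by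
    intro x y
    rw [dist_pi_le_iff (mul_nonneg h1lam0.le dist_nonneg)]
    intro q
    by_cases hqG : q ∈ G
    · have e1 : Γ x q = m q := if_pos hqG
      have e2 : Γ y q = m q := if_pos hqG
      rw [e1, e2, dist_self]
      exact mul_nonneg h1lam0.le dist_nonneg
    · have e1 : Γ x q = (1-lam) * CRG.Δop δ dist T x q := if_neg hqG
      have e2 : Γ y q = (1-lam) * CRG.Δop δ dist T y q := if_neg hqG
      rw [e1, e2, Real.dist_eq, ← mul_sub, abs_mul, abs_of_nonneg h1lam0.le]
      refine mul_le_mul_of_nonneg_left ?_ h1lam0.le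
      rw [abs_sub_le_iff]
      constructor
      · linarith [hΔlip x y q]
      · have h2 := hΔlip y x q
        rw [dist_comm] at h2
        linarith
  set K : NNReal := Real.toNNReal (1 - lam) with hK
  have hKcoe : (K : ℝ) = 1 - lam := Real.coe_toNNReal _ h1lam0.le
  have hcontr : ContractingWith K Γ := by
    constructor
    · rw [← NNReal.coe_lt_coe, hKcoe, NNReal.coe_one]; linarith
    · exact LipschitzWith.of_dist_le_mul (fun x y => by rw [hKcoe]; exact hΓlip x y)
  set v : Q → ℝ := ContractingWith.fixedPoint Γ hcontr with hvdef
  have hvfix : Γ v = v := hcontr.fixedPoint_isFixedPt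
  have hvG : ∀ q ∈ G, v q = m q := by
    intro q hq
    have h : Γ v q = v q := congrFun hvfix q
    have e1 : Γ v q = m q := if_pos hq
    rw [e1] at h
    exact h.symm
  have hvnG : ∀ q ∉ G, v q = (1 - lam) * CRG.Δop δ dist T v q := by
    intro q hq
    have h : Γ v q = v q := congrFun hvfix q
    have e1 : Γ v q = (1-lam) * CRG.Δop δ dist T v q := if_neg hq
    rw [e1] at h
    exact h.symm
  have hQne : (Finset.univ : Finset Q).Nonempty := Finset.univ_nonempty
  -- v ≤ m
  have hvlem : ∀ q, v q ≤ m q := by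
    by_contra hcon
    push_neg at hcon
    obtain ⟨qq, hqq⟩ := hcon
    obtain ⟨q₀, -, hq₀⟩ := Finset.exists_mem_eq_sup' hQne (fun q => v q - m q)
    set M : ℝ := Finset.univ.sup' hQne (fun q => v q - m q) with hM
    have hq₀' : M = v q₀ - m q₀ := hq₀
    have hMpos : 0 < M :=
      lt_of_lt_of_le (by linarith) (Finset.le_sup' (fun q => v q - m q) (Finset.mem_univ qq))
    have hub : ∀ q, v q ≤ m q + M := by
      intro q
      have h := Finset.le_sup' (fun q => v q - m q) (Finset.mem_univ q)
      have h' : v q - m q ≤ M := h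
      linarith
    by_cases hq₀G : q₀ ∈ G
    · have := hvG q₀ hq₀G
      rw [hq₀'] at hMpos
      linarith
    · have h1 := hvnG q₀ hq₀G
      have h2 : CRG.Δop δ dist T v q₀ ≤ m q₀ + M := by
        have h3 : CRG.Δop δ dist T v q₀ ≤ CRG.Δop δ dist T m q₀ + M :=
          Stmt14Aux.Δop_le_Δop_add hMpos.le hub q₀
        rw [hfix' q₀] at h3
        exact h3
      nlinarith [hm0 q₀, mul_le_mul_of_nonneg_left h2 h1lam0.le]
  -- 0 ≤ v
  have hv0 : ∀ q, 0 ≤ v q := by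
    by_contra hcon
    push_neg at hcon
    obtain ⟨qq, hqq⟩ := hcon
    obtain ⟨q₀, -, hq₀⟩ := Finset.exists_mem_eq_sup' hQne (fun q => -v q)
    set M : ℝ := Finset.univ.sup' hQne (fun q => -v q) with hM
    have hq₀' : M = -v q₀ := hq₀
    have hMpos : 0 < M :=
      lt_of_lt_of_le (by linarith) (Finset.le_sup' (fun q => -v q) (Finset.mem_univ qq))
    have hlb : ∀ q, -M ≤ v q := by
      intro q
      have h := Finset.le_sup' (fun q => -v q) (Finset.mem_univ q)
      have h' : -v q ≤ M := h
      linarith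
    by_cases hq₀G : q₀ ∈ G
    · have := hvG q₀ hq₀G
      nlinarith [hm0 q₀]
    · have h1 := hvnG q₀ hq₀G
      have h2 : -M ≤ CRG.Δop δ dist T v q₀ :=
        Stmt14Aux.le_Δop (by linarith) hlb q₀
      nlinarith [mul_le_mul_of_nonneg_left h2 h1lam0.le]
  have hv1 : ∀ q, v q ≤ 1 := fun q => (hvlem q).trans (hm1 q)
  -- lower bound via vseq
  have hlow : ∀ n q, (1 - lam)^(n+1) * V n q ≤ v q := by
    intro n
    induction n with
    | zero =>
      intro q
      by_cases hqT : q = T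
      · rw [hqT, hV0T, mul_one, pow_one]
        by_cases hTG : T ∈ G
        · rw [hvG T hTG, hmT]; linarith
        · rw [hvnG T hTG, Stmt14Aux.Δop_T, mul_one]
      · rw [hV0' q hqT, mul_zero]; exact hv0 q
    | succ n ih =>
      intro q
      by_cases hqG : q ∈ G
      · rw [hvG q hqG]
        have h1 : V (n+1) q ≤ m q := hVlem (n+1) q
        have h2 : (1-lam)^(n+1+1) ≤ 1 := pow_le_one₀ h1lam0.le (by linarith)
        have h3 : (0:ℝ) ≤ (1-lam)^(n+1+1) := by positivity
        nlinarith [hVnonneg (n+1) q]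
      · by_cases hqT : q = T
        · rw [hvnG q hqG, hqT, Stmt14Aux.Δop_T, hVT, mul_one, mul_one]
          calc (1-lam)^(n+1+1) ≤ (1-lam)^1 :=
                pow_le_pow_of_le_one h1lam0.le (by linarith) (by omega)
            _ = 1 - lam := pow_one _
        · rw [hvnG q hqG]
          have hstep : (1-lam)^(n+1) * V (n+1) q ≤ CRG.Δop δ dist T v q := by
            have e1 : V (n+1) q = CRG.valGF (fun a b => CRG.lift dist (V n) (δ q a b)) := by
              rw [hVsucc]
              simp only [CRG.Δop]
              rw [if_neg hqT]
            rw [e1]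
            calc (1-lam)^(n+1) * CRG.valGF (fun a b => CRG.lift dist (V n) (δ q a b))
                ≤ CRG.valGF (fun a b => (1-lam)^(n+1) * CRG.lift dist (V n) (δ q a b)) :=
                  Stmt14Aux.smul_valGF_le (by positivity)
              _ = CRG.valGF (fun a b =>
                    CRG.lift dist (fun q' => (1-lam)^(n+1) * V n q') (δ q a b)) := by
                  congr 1
                  funext a b
                  rw [Stmt14Aux.lift_smul]
              _ ≤ CRG.valGF (fun a b => CRG.lift dist v (δ q a b)) :=
                  Stmt14Aux.valGF_mono (fun a b => Stmt14Aux.lift_mono (fun q' => ih q') _)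
              _ = CRG.Δop δ dist T v q := by
                  simp only [CRG.Δop]
                  rw [if_neg hqT]
          calc (1-lam)^(n+1+1) * V (n+1) q
              = (1-lam) * ((1-lam)^(n+1) * V (n+1) q) := by ring
            _ ≤ (1-lam) * CRG.Δop δ dist T v q :=
                mul_le_mul_of_nonneg_left hstep h1lam0.le
  -- closeness
  have hclose : ∀ q, m q - v q ≤ ε := by
    intro q
    have h1 : (1-lam)^(N+1) * V N q ≤ v q := hlow N q
    have hbern : 1 - ((N:ℝ)+1)*lam ≤ (1-lam)^(N+1) := by
      have hb := one_add_mul_le_pow (a := -lam) (by linarith) (N+1)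
      have e : (1 + -lam) = (1 - lam) := by ring
      rw [e] at hb
      push_cast at hb
      linarith
    have hd : (0:ℝ) ≤ ((N:ℝ)+1)*lam := by positivity
    have h2 : (1 - ((N:ℝ)+1)*lam) * V N q ≤ (1-lam)^(N+1) * V N q :=
      mul_le_mul_of_nonneg_right hbern (hVnonneg N q)
    have h3 : V N q - ((N:ℝ)+1)*lam ≤ (1 - ((N:ℝ)+1)*lam) * V N q := by
      nlinarith [hVle1 N q, hVnonneg N q]
    have h4 : m q - ε/2 < V N q := hNapprox q
    linarith
  -- strictness
  have hstrict : ∀ q ∉ G, v q < CRG.Δop δ dist T v q := by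
    intro q hqG
    have h1 := hvnG q hqG
    by_cases hqT : q = T
    · rw [hqT] at h1 ⊢
      rw [Stmt14Aux.Δop_T] at h1 ⊢
      rw [h1, mul_one]
      linarith
    · have hmq : 0 < m q := lt_of_le_of_ne (hm0 q) (Ne.symm (hG q hqG))
      obtain ⟨n, hn⟩ := hsup q 0 hmq
      have hvpos : 0 < v q :=
        lt_of_lt_of_le (mul_pos (pow_pos h1lam0 (n+1)) hn) (hlow n q)
      have hX : 0 < CRG.Δop δ dist T v q := by nlinarith [h1, hvpos]
      nlinarith [h1, hX, hlam0]
  refine ⟨v, fun q => ⟨hv0 q, hv1 q⟩, hvlem, fun q => ?_, hvG, hstrict⟩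
  rw [abs_of_nonneg (by linarith [hvlem q])]
  exact hclose q
end
end

section
/- Let s_A be a Player A strategy in a finite concurrent reachability game that is optimal from a state q. Then for every relevant path π = π'·q' ∈ RP_{s_A}(q): (i) the local strategy s_A(π) is optimal in the game ⟨F_{q'}, μ_m⟩, i.e. s_A(π) ∈ Opt_A(⟨F_{q'}, μ_m⟩); and (ii) for every optimal action b ∈ B_{s_A(π)} and every state q'' with p_{q',q''}(s_A(π), b) > 0, the residual strategy s_A^π is optimal from q'': val(s_A^π)(q'') = val(q''). -/
open scoped BigOperators Classical

noncomputable section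

section Aux
open CRG Finset

variable {A B Q D : Type} [Fintype A] [Fintype B] [Fintype Q] [Fintype D]
variable [Nonempty A] [Nonempty B] [Nonempty Q] [Nonempty D]

instance {X : Type} [Fintype X] [Nonempty X] : Nonempty (FDist X) :=
  ⟨CRG.dirac (Classical.arbitrary X)⟩

instance {X Q : Type} [Fintype X] [Nonempty X] : Nonempty (CRG.Strat Q X) :=
  ⟨fun _ _ => Classical.arbitrary _⟩

lemma fd_nonneg {X : Type} [Fintype X] (σ : FDist X) (x : X) : 0 ≤ σ.1 x := σ.2.1 x

lemma fd_sum {X : Type} [Fintype X] (σ : FDist X) : ∑ x, σ.1 x = 1 := σ.2.2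

lemma out_eq_sum (u : A → B → ℝ) (σA : FDist A) (σB : FDist B) :
    out u σA σB = ∑ b, σB.1 b * outB u σA b := by
  rw [out, Finset.sum_comm]
  refine Finset.sum_congr rfl fun b _ => ?_
  rw [outB, Finset.mul_sum]
  exact Finset.sum_congr rfl fun a _ => by ring

lemma out_dirac [DecidableEq B] (u : A → B → ℝ) (σA : FDist A) (b₀ : B) :
    out u σA (dirac b₀) = outB u σA b₀ := by
  rw [out_eq_sum, Finset.sum_eq_single b₀]
  · show (if b₀ = b₀ then (1:ℝ) else 0) * _ = _
    rw [if_pos rfl, one_mul]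
  · intro b _ hb
    show (if b = b₀ then (1:ℝ) else 0) * _ = 0
    rw [if_neg hb, zero_mul]
  · intro hb; exact absurd (mem_univ b₀) hb

lemma inf'_le_out (u : A → B → ℝ) (σA : FDist A) (σB : FDist B) :
    univ.inf' univ_nonempty (outB u σA) ≤ out u σA σB := by
  rw [out_eq_sum]
  calc univ.inf' univ_nonempty (outB u σA)
      = ∑ b, σB.1 b * univ.inf' univ_nonempty (outB u σA) := by
        rw [← Finset.sum_mul, fd_sum, one_mul]
    _ ≤ ∑ b, σB.1 b * outB u σA b :=
        Finset.sum_le_sum fun b _ =>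
          mul_le_mul_of_nonneg_left (Finset.inf'_le _ (mem_univ b)) (fd_nonneg σB b)

lemma valStrat_eq (u : A → B → ℝ) (σA : FDist A) :
    valStratGF u σA = univ.inf' univ_nonempty (outB u σA) := by
  classical
  unfold valStratGF
  refine le_antisymm ?_ (le_ciInf fun σB => inf'_le_out u σA σB)
  obtain ⟨b₀, -, hb₀⟩ := exists_mem_eq_inf' (univ_nonempty) (outB u σA)
  rw [hb₀]
  have h := ciInf_le (f := fun σB : FDist B => out u σA σB)
    ⟨_, by rintro x ⟨σB, rfl⟩; exact inf'_le_out u σA σB⟩ (dirac b₀)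
  rwa [out_dirac] at h

lemma valStrat_le_outB (u : A → B → ℝ) (σA : FDist A) (b : B) :
    valStratGF u σA ≤ outB u σA b := by
  rw [valStrat_eq]; exact Finset.inf'_le _ (mem_univ b)

lemma le_valStrat {u : A → B → ℝ} {σA : FDist A} {c : ℝ} (h : ∀ b, c ≤ outB u σA b) :
    c ≤ valStratGF u σA := by
  rw [valStrat_eq]; exact Finset.le_inf' _ _ fun b _ => h b

lemma exists_outB_eq (u : A → B → ℝ) (σA : FDist A) :
    ∃ b, outB u σA b = valStratGF u σA := by
  obtain ⟨b₀, -, hb₀⟩ := exists_mem_eq_inf' (univ_nonempty (α := B)) (outB u σA)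
  exact ⟨b₀, by rw [valStrat_eq, hb₀]⟩

lemma valStrat_le_out (u : A → B → ℝ) (σA : FDist A) (σB : FDist B) :
    valStratGF u σA ≤ out u σA σB := by
  rw [valStrat_eq]; exact inf'_le_out u σA σB

lemma outB_nonneg {u : A → B → ℝ} (hu : ∀ a b, u a b ∈ Set.Icc (0:ℝ) 1)
    (σA : FDist A) (b : B) : 0 ≤ outB u σA b :=
  Finset.sum_nonneg fun a _ => mul_nonneg (fd_nonneg σA a) (hu a b).1

lemma outB_le_one {u : A → B → ℝ} (hu : ∀ a b, u a b ∈ Set.Icc (0:ℝ) 1)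
    (σA : FDist A) (b : B) : outB u σA b ≤ 1 := by
  calc outB u σA b ≤ ∑ a, σA.1 a :=
        Finset.sum_le_sum fun a _ => mul_le_of_le_one_right (fd_nonneg σA a) (hu a b).2
    _ = 1 := fd_sum σA

lemma valStrat_nonneg {u : A → B → ℝ} (hu : ∀ a b, u a b ∈ Set.Icc (0:ℝ) 1)
    (σA : FDist A) : 0 ≤ valStratGF u σA :=
  le_valStrat fun b => outB_nonneg hu σA b

lemma valStrat_le_one {u : A → B → ℝ} (hu : ∀ a b, u a b ∈ Set.Icc (0:ℝ) 1)
    (σA : FDist A) : valStratGF u σA ≤ 1 :=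
  (valStrat_le_outB u σA (Classical.arbitrary B)).trans (outB_le_one hu σA _)

lemma bdd_valStrat {u : A → B → ℝ} (hu : ∀ a b, u a b ∈ Set.Icc (0:ℝ) 1) :
    BddAbove (Set.range fun σA : FDist A => valStratGF u σA) :=
  ⟨1, by rintro x ⟨σA, rfl⟩; exact valStrat_le_one hu σA⟩

lemma valStrat_le_valGF {u : A → B → ℝ} (hu : ∀ a b, u a b ∈ Set.Icc (0:ℝ) 1)
    (σA : FDist A) : valStratGF u σA ≤ valGF u :=
  le_ciSup (bdd_valStrat hu) σA

lemma valGF_nonneg {u : A → B → ℝ} (hu : ∀ a b, u a b ∈ Set.Icc (0:ℝ) 1) :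
    0 ≤ valGF u :=
  (valStrat_nonneg hu (Classical.arbitrary _)).trans (valStrat_le_valGF hu _)

lemma valGF_le_one {u : A → B → ℝ} (hu : ∀ a b, u a b ∈ Set.Icc (0:ℝ) 1) :
    valGF u ≤ 1 :=
  ciSup_le fun σA => valStrat_le_one hu σA

lemma outB_le_add {u u' : A → B → ℝ} {c : ℝ} (h : ∀ a b, u a b ≤ u' a b + c)
    (σA : FDist A) (b : B) : outB u σA b ≤ outB u' σA b + c := by
  calc outB u σA b ≤ ∑ a, (σA.1 a * u' a b + σA.1 a * c) := by
        refine Finset.sum_le_sum fun a _ => ?_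
        rw [← mul_add]
        exact mul_le_mul_of_nonneg_left (h a b) (fd_nonneg σA a)
    _ = outB u' σA b + c := by
        rw [Finset.sum_add_distrib, ← Finset.sum_mul, fd_sum, one_mul]; rfl

lemma valGF_le_add {u u' : A → B → ℝ} {c : ℝ} (h : ∀ a b, u a b ≤ u' a b + c)
    (hu' : ∀ a b, u' a b ∈ Set.Icc (0:ℝ) 1) : valGF u ≤ valGF u' + c := by
  unfold valGF
  refine ciSup_le fun σA => ?_
  obtain ⟨b₀, hb₀⟩ := exists_outB_eq u' σA
  calc valStratGF u σA ≤ outB u σA b₀ := valStrat_le_outB u σA b₀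
    _ ≤ outB u' σA b₀ + c := outB_le_add h σA b₀
    _ = valStratGF u' σA + c := by rw [hb₀]
    _ ≤ (⨆ σA' : FDist A, valStratGF u' σA') + c :=
        add_le_add (valStrat_le_valGF hu' σA) le_rfl

lemma const_one_valStrat {u : A → B → ℝ} (hu : ∀ a b, u a b = 1) (σA : FDist A) :
    valStratGF u σA = 1 := by
  have hb : ∀ b, outB u σA b = 1 := fun b => by
    unfold outB; simp only [hu, mul_one]; exact fd_sum σA
  refine le_antisymm ((valStrat_le_outB u σA (Classical.arbitrary B)).trans (hb _).le) ?_
  exact le_valStrat fun b => (hb b).ge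

lemma const_one_valGF {u : A → B → ℝ} (hu : ∀ a b, u a b = 1) : valGF u = 1 := by
  unfold valGF
  rw [show (fun σA : FDist A => valStratGF u σA) = fun _ => (1:ℝ) from
    funext fun σA => const_one_valStrat hu σA]
  exact ciSup_const

end Aux
section Aux2
open CRG Finset
set_option linter.unusedSectionVars false

variable {A B Q D : Type} [Fintype A] [Fintype B] [Fintype Q] [Fintype D]
variable [Nonempty A] [Nonempty B] [Nonempty Q] [Nonempty D]

lemma lift_mem (dist : D → FDist Q) {v : Q → ℝ} (hv : ∀ q, v q ∈ Set.Icc (0:ℝ) 1)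
    (d : D) : lift dist v d ∈ Set.Icc (0:ℝ) 1 := by
  unfold lift
  constructor
  · exact Finset.sum_nonneg fun q _ => mul_nonneg (fd_nonneg _ _) (hv q).1
  · calc ∑ q, (dist d).1 q * v q ≤ ∑ q, (dist d).1 q :=
        Finset.sum_le_sum fun q _ => mul_le_of_le_one_right (fd_nonneg _ _) (hv q).2
      _ = 1 := fd_sum _

lemma lift_le_add (dist : D → FDist Q) {v w : Q → ℝ} {c : ℝ}
    (h : ∀ q, v q ≤ w q + c) (d : D) : lift dist v d ≤ lift dist w d + c := by
  unfold lift
  calc ∑ q, (dist d).1 q * v q ≤ ∑ q, ((dist d).1 q * w q + (dist d).1 q * c) := by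
        refine Finset.sum_le_sum fun q _ => ?_
        rw [← mul_add]
        exact mul_le_mul_of_nonneg_left (h q) (fd_nonneg _ _)
    _ = (∑ q, (dist d).1 q * w q) + c := by
        rw [Finset.sum_add_distrib, ← Finset.sum_mul, fd_sum, one_mul]

lemma Δop_le_add (δ : Q → A → B → D) (dist : D → FDist Q) (T : Q) {v w : Q → ℝ} {c : ℝ}
    (hc : 0 ≤ c) (h : ∀ q, v q ≤ w q + c) (hw : ∀ q, w q ∈ Set.Icc (0:ℝ) 1) (q : Q) :
    Δop δ dist T v q ≤ Δop δ dist T w q + c := by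
  unfold Δop
  by_cases hq : q = T
  · rw [if_pos hq, if_pos hq]; linarith
  · rw [if_neg hq, if_neg hq]
    exact valGF_le_add (fun a b => lift_le_add dist h _) (fun a b => lift_mem dist hw _)

lemma Δop_mono (δ : Q → A → B → D) (dist : D → FDist Q) (T : Q) {v w : Q → ℝ}
    (h : ∀ q, v q ≤ w q) (hw : ∀ q, w q ∈ Set.Icc (0:ℝ) 1) (q : Q) :
    Δop δ dist T v q ≤ Δop δ dist T w q := by
  have := Δop_le_add δ dist T (v := v) (w := w) (c := 0) le_rfl (fun q => by linarith [h q]) hw q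
  linarith

lemma Δop_mem (δ : Q → A → B → D) (dist : D → FDist Q) (T : Q) {v : Q → ℝ}
    (hv : ∀ q, v q ∈ Set.Icc (0:ℝ) 1) (q : Q) : Δop δ dist T v q ∈ Set.Icc (0:ℝ) 1 := by
  unfold Δop
  by_cases hq : q = T
  · rw [if_pos hq]; exact ⟨zero_le_one, le_rfl⟩
  · rw [if_neg hq]
    have hu : ∀ a b, lift dist v (δ q a b) ∈ Set.Icc (0:ℝ) 1 := fun a b => lift_mem dist hv _
    exact ⟨valGF_nonneg hu, valGF_le_one hu⟩

lemma step_nonneg (δ : Q → A → B → D) (dist : D → FDist Q) (σA : FDist A) (σB : FDist B)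
    (q q' : Q) : 0 ≤ step δ dist σA σB q q' :=
  Finset.sum_nonneg fun a _ => Finset.sum_nonneg fun b _ =>
    mul_nonneg (mul_nonneg (fd_nonneg _ _) (fd_nonneg _ _)) (fd_nonneg _ _)

lemma step_mul_sum (δ : Q → A → B → D) (dist : D → FDist Q) (σA : FDist A) (σB : FDist B)
    (q : Q) (v : Q → ℝ) :
    ∑ q', step δ dist σA σB q q' * v q' = out (locPay δ dist v q) σA σB := by
  unfold step out locPay lift
  simp only [Finset.sum_mul]
  rw [Finset.sum_comm]
  refine Finset.sum_congr rfl fun a _ => ?_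
  rw [Finset.sum_comm]
  refine Finset.sum_congr rfl fun b _ => ?_
  rw [Finset.mul_sum]
  exact Finset.sum_congr rfl fun q' _ => by ring

lemma step_sum_one (δ : Q → A → B → D) (dist : D → FDist Q) (σA : FDist A) (σB : FDist B)
    (q : Q) : ∑ q', step δ dist σA σB q q' = 1 := by
  have h := step_mul_sum δ dist σA σB q (fun _ => 1)
  simp only [mul_one] at h
  rw [h]
  unfold out locPay lift
  simp only [mul_one]
  have : ∀ a b, σA.1 a * σB.1 b * ∑ q'', (dist (δ q a b)).1 q'' = σA.1 a * σB.1 b := by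
    intro a b; rw [fd_sum, mul_one]
  calc ∑ a, ∑ b, σA.1 a * σB.1 b * ∑ q'', (dist (δ q a b)).1 q''
      = ∑ a, ∑ b, σA.1 a * σB.1 b := by
        exact Finset.sum_congr rfl fun a _ => Finset.sum_congr rfl fun b _ => this a b
    _ = ∑ a, σA.1 a * ∑ b, σB.1 b := by
        exact Finset.sum_congr rfl fun a _ => (Finset.mul_sum _ _ _).symm
    _ = 1 := by rw [fd_sum]; simp only [mul_one]; exact fd_sum σA

end Aux2
section Aux3
open CRG Finset
set_option linter.unusedSectionVars false

variable {A B Q D : Type} [Fintype A] [Fintype B] [Fintype Q] [Fintype D]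
variable [Nonempty A] [Nonempty B] [Nonempty Q] [Nonempty D]
variable (δ : Q → A → B → D) (dist : D → FDist Q)

lemma aux_nonneg (S : Set Q) (sA : Strat Q A) (sB : Strat Q B) :
    ∀ (n : ℕ) (h : List Q) (q : Q), 0 ≤ reachSetNAux δ dist S n sA sB h q
  | 0, h, q => by
      simp only [reachSetNAux]; split <;> norm_num
  | n+1, h, q => by
      simp only [reachSetNAux]; split
      · norm_num
      · exact Finset.sum_nonneg fun q' _ =>
          mul_nonneg (step_nonneg δ dist _ _ _ _) (aux_nonneg S sA sB n _ _)

lemma aux_le_one (S : Set Q) (sA : Strat Q A) (sB : Strat Q B) :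
    ∀ (n : ℕ) (h : List Q) (q : Q), reachSetNAux δ dist S n sA sB h q ≤ 1
  | 0, h, q => by
      simp only [reachSetNAux]; split <;> norm_num
  | n+1, h, q => by
      simp only [reachSetNAux]; split
      · norm_num
      · calc ∑ q', step δ dist (sA h q) (sB h q) q q' *
              reachSetNAux δ dist S n sA sB (h ++ [q]) q'
            ≤ ∑ q', step δ dist (sA h q) (sB h q) q q' * 1 :=
              Finset.sum_le_sum fun q' _ =>
                mul_le_mul_of_nonneg_left (aux_le_one S sA sB n _ _)
                  (step_nonneg δ dist _ _ _ _)
          _ = 1 := by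
              simp only [mul_one]; exact step_sum_one δ dist _ _ _

variable (T : Q)

lemma reachN_nonneg (n : ℕ) (sA : Strat Q A) (sB : Strat Q B) (q : Q) :
    0 ≤ reachN δ dist T n sA sB q := aux_nonneg δ dist _ sA sB n [] q

lemma reachN_le_one (n : ℕ) (sA : Strat Q A) (sB : Strat Q B) (q : Q) :
    reachN δ dist T n sA sB q ≤ 1 := aux_le_one δ dist _ sA sB n [] q

lemma bdd_reach (sA : Strat Q A) (sB : Strat Q B) (q : Q) :
    BddAbove (Set.range fun n => reachN δ dist T n sA sB q) :=
  ⟨1, by rintro x ⟨n, rfl⟩; exact reachN_le_one δ dist T n sA sB q⟩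

lemma reachN_le_reach (n : ℕ) (sA : Strat Q A) (sB : Strat Q B) (q : Q) :
    reachN δ dist T n sA sB q ≤ reach δ dist T sA sB q :=
  le_ciSup (bdd_reach δ dist T sA sB q) n

lemma reach_nonneg (sA : Strat Q A) (sB : Strat Q B) (q : Q) :
    0 ≤ reach δ dist T sA sB q :=
  (reachN_nonneg δ dist T 0 sA sB q).trans (reachN_le_reach δ dist T 0 sA sB q)

lemma reach_le_one (sA : Strat Q A) (sB : Strat Q B) (q : Q) :
    reach δ dist T sA sB q ≤ 1 :=
  ciSup_le fun n => reachN_le_one δ dist T n sA sB q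

lemma valA_le_reach (sA : Strat Q A) (sB : Strat Q B) (q : Q) :
    valA δ dist T sA q ≤ reach δ dist T sA sB q :=
  ciInf_le ⟨0, by rintro x ⟨sB', rfl⟩; exact reach_nonneg δ dist T sA sB' q⟩ sB

lemma valA_nonneg (sA : Strat Q A) (q : Q) : 0 ≤ valA δ dist T sA q :=
  le_ciInf fun sB => reach_nonneg δ dist T sA sB q

lemma valA_le_one (sA : Strat Q A) (q : Q) : valA δ dist T sA q ≤ 1 :=
  (valA_le_reach δ dist T sA (Classical.arbitrary _) q).trans
    (reach_le_one δ dist T sA _ q)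

lemma valA_le_value (sA : Strat Q A) (q : Q) :
    valA δ dist T sA q ≤ value δ dist T q :=
  le_ciSup (f := fun sA' : Strat Q A => valA δ dist T sA' q)
    ⟨1, by rintro x ⟨sA', rfl⟩; exact valA_le_one δ dist T sA' q⟩ sA

lemma reach_T (sA : Strat Q A) (sB : Strat Q B) : reach δ dist T sA sB T = 1 := by
  refine le_antisymm (reach_le_one δ dist T sA sB T) ?_
  have h0 : reachN δ dist T 0 sA sB T = 1 := by
    simp only [reachN, reachSetN, reachSetNAux]
    simp
  rw [← h0]; exact reachN_le_reach δ dist T 0 sA sB T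

lemma valA_T (sA : Strat Q A) : valA δ dist T sA T = 1 := by
  refine le_antisymm (valA_le_one δ dist T sA T) ?_
  exact le_ciInf fun sB => (reach_T δ dist T sA sB).ge

lemma value_T : value δ dist T T = 1 := by
  refine le_antisymm (ciSup_le fun sA => valA_le_one δ dist T sA T) ?_
  have h := valA_le_value δ dist T (Classical.arbitrary _) T
  rwa [valA_T] at h

lemma aux_shift (S : Set Q) (sA : Strat Q A) (sB : Strat Q B) :
    ∀ (n : ℕ) (h0 h : List Q) (q : Q),
      reachSetNAux δ dist S n sA sB (h0 ++ h) q =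
        reachSetNAux δ dist S n (residual sA h0) (residual sB h0) h q
  | 0, h0, h, q => by simp only [reachSetNAux]
  | n+1, h0, h, q => by
      simp only [reachSetNAux, CRG.residual]
      split
      · rfl
      · refine Finset.sum_congr rfl fun q' _ => ?_
        rw [List.append_assoc]
        rw [aux_shift S sA sB n h0 (h ++ [q]) q']

lemma aux_congr (S : Set Q) (sA : Strat Q A) :
    ∀ (n : ℕ) (sB₁ sB₂ : Strat Q B) (h : List Q) (q : Q),
      (∀ (h'' : List Q) (q'' : Q), sB₁ (h ++ q :: h'') q'' = sB₂ (h ++ q :: h'') q'') →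
      sB₁ h q = sB₂ h q →
      reachSetNAux δ dist S n sA sB₁ h q = reachSetNAux δ dist S n sA sB₂ h q
  | 0, sB₁, sB₂, h, q, _, _ => by simp only [reachSetNAux]
  | n+1, sB₁, sB₂, h, q, hdeep, hroot => by
      simp only [reachSetNAux]
      split
      · rfl
      · refine Finset.sum_congr rfl fun q' _ => ?_
        rw [hroot]
        congr 1
        refine aux_congr S sA n sB₁ sB₂ (h ++ [q]) q' ?_ ?_
        · intro h'' q''
          have he : (h ++ [q]) ++ q' :: h'' = h ++ q :: (q' :: h'') := by simp
          rw [he]; exact hdeep _ _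
        · exact hdeep [] q'

end Aux3
section Aux4
open CRG Finset
set_option linter.unusedSectionVars false

variable {A B Q D : Type} [Fintype A] [Fintype B] [Fintype Q] [Fintype D]
variable [Nonempty A] [Nonempty B] [Nonempty Q] [Nonempty D]
variable (δ : Q → A → B → D) (dist : D → FDist Q) (T : Q)

lemma key_step (t : Strat Q A) (q : Q) (hq : q ≠ T) (σB : FDist B) :
    valA δ dist T t q ≤
      ∑ q', step δ dist (t [] q) σB q q' * valA δ dist T (residual t [q]) q' := by
  refine le_of_forall_pos_le_add fun ε hε => ?_
  have hchoice : ∀ q' : Q, ∃ sB : Strat Q B,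
      reach δ dist T (residual t [q]) sB q' <
        valA δ dist T (residual t [q]) q' + ε := by
    intro q'
    refine exists_lt_of_ciInf_lt ?_
    exact lt_add_of_pos_right _ hε
  choose sBc hsBc using hchoice
  classical
  set sB : Strat Q B := fun h q'' =>
    match h with
    | [] => σB
    | [_] => sBc q'' [] q''
    | _ :: y :: h' => sBc y (y :: h') q''
    with hsB
  have hres : ∀ (q' : Q) (n : ℕ),
      reachSetNAux δ dist {T} n (residual t [q]) (residual sB [q]) [] q' =
        reachN δ dist T n (residual t [q]) (sBc q') q' := by
    intro q' n
    refine aux_congr δ dist {T} (residual t [q]) n _ _ [] q' ?_ ?_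
    · intro h'' q''; rfl
    · rfl
  calc valA δ dist T t q ≤ reach δ dist T t sB q := valA_le_reach δ dist T t sB q
    _ ≤ ∑ q', step δ dist (t [] q) σB q q' * valA δ dist T (residual t [q]) q' + ε := by
        refine ciSup_le fun n => ?_
        have hrhs0 : 0 ≤ ∑ q', step δ dist (t [] q) σB q q' *
            valA δ dist T (residual t [q]) q' :=
          Finset.sum_nonneg fun q' _ => mul_nonneg (step_nonneg δ dist _ _ _ _)
            (valA_nonneg δ dist T _ _)
        match n with
        | 0 =>
          have h0 : reachN δ dist T 0 t sB q = 0 := by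
            simp only [reachN, reachSetN, reachSetNAux]
            rw [if_neg (by simpa using hq)]
          rw [h0]; linarith
        | n+1 =>
          have h1 : reachN δ dist T (n+1) t sB q =
              ∑ q', step δ dist (t [] q) σB q q' *
                reachSetNAux δ dist {T} n t sB [q] q' := by
            simp only [reachN, reachSetN, reachSetNAux]
            rw [if_neg (by simpa using hq)]
            rfl
          rw [h1]
          have h2 : ∀ q', reachSetNAux δ dist {T} n t sB [q] q' ≤
              valA δ dist T (residual t [q]) q' + ε := by
            intro q'
            have hs := aux_shift δ dist {T} t sB n [q] [] q'
            rw [List.append_nil] at hs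
            rw [hs, hres q' n]
            exact ((reachN_le_reach δ dist T n _ _ q').trans (hsBc q').le)
          calc ∑ q', step δ dist (t [] q) σB q q' *
                reachSetNAux δ dist {T} n t sB [q] q'
              ≤ ∑ q', step δ dist (t [] q) σB q q' *
                  (valA δ dist T (residual t [q]) q' + ε) :=
                Finset.sum_le_sum fun q' _ =>
                  mul_le_mul_of_nonneg_left (h2 q') (step_nonneg δ dist _ _ _ _)
            _ = ∑ q', step δ dist (t [] q) σB q q' *
                  valA δ dist T (residual t [q]) q' + ε := by
                simp only [mul_add, Finset.sum_add_distrib, ← Finset.sum_mul]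
                rw [step_sum_one δ dist _ _ q, one_mul]

lemma value_le_m (m : Q → ℝ) (hm : CRG.IsLfpDelta δ dist T m) (q : Q) :
    value δ dist T q ≤ m q := by
  classical
  obtain ⟨hmem, hfix, -⟩ := hm
  have hmT : m T = 1 := by
    have h := congrFun hfix T
    simpa [Δop] using h.symm
  have hmfix : ∀ q', q' ≠ T → valGF (locPay δ dist m q') = m q' := by
    intro q' hq'
    have h := congrFun hfix q'
    exact (by simpa [Δop, hq'] using h : valGF (fun a b => lift dist m (δ q' a b)) = m q')
  refine ciSup_le fun sA => ?_
  have hbf : ∀ (h : List Q) (q' : Q), ∃ b,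
      outB (locPay δ dist m q') (sA h q') b = valStratGF (locPay δ dist m q') (sA h q') :=
    fun h q' => exists_outB_eq _ _
  choose bf hbfspec using hbf
  set sB : Strat Q B := fun h q' => dirac (bf h q') with hsB
  have haux : ∀ (n : ℕ) (h : List Q) (q' : Q),
      reachSetNAux δ dist {T} n sA sB h q' ≤ m q' := by
    intro n
    induction n with
    | zero =>
      intro h q'
      simp only [reachSetNAux]
      split
      · rename_i hmem'
        have : q' = T := by simpa using hmem'
        rw [this, hmT]
      · exact (hmem q').1
    | succ n ih =>
      intro h q'
      simp only [reachSetNAux]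
      split
      · rename_i hmem'
        have : q' = T := by simpa using hmem'
        rw [this, hmT]
      · rename_i hmem'
        have hq'T : q' ≠ T := by simpa using hmem'
        have hpay : ∀ a b, locPay δ dist m q' a b ∈ Set.Icc (0:ℝ) 1 :=
          fun a b => lift_mem dist hmem _
        calc ∑ q'', step δ dist (sA h q') (sB h q') q' q'' *
              reachSetNAux δ dist {T} n sA sB (h ++ [q']) q''
            ≤ ∑ q'', step δ dist (sA h q') (sB h q') q' q'' * m q'' :=
              Finset.sum_le_sum fun q'' _ =>
                mul_le_mul_of_nonneg_left (ih _ q'') (step_nonneg δ dist _ _ _ _)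
          _ = out (locPay δ dist m q') (sA h q') (sB h q') :=
              step_mul_sum δ dist _ _ _ _
          _ = outB (locPay δ dist m q') (sA h q') (bf h q') := out_dirac _ _ _
          _ = valStratGF (locPay δ dist m q') (sA h q') := hbfspec h q'
          _ ≤ valGF (locPay δ dist m q') := valStrat_le_valGF hpay _
          _ = m q' := hmfix q' hq'T
  exact (valA_le_reach δ dist T sA sB q).trans (ciSup_le fun n => haux n [] q)

end Aux4
section Aux5
open CRG Finset
set_option linter.unusedSectionVars false

variable {A B Q D : Type} [Fintype A] [Fintype B] [Fintype Q] [Fintype D]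
variable [Nonempty A] [Nonempty B] [Nonempty Q] [Nonempty D]
variable (δ : Q → A → B → D) (dist : D → FDist Q) (T : Q)

lemma vseq_mem : ∀ (n : ℕ) (q : Q), vseq δ dist T n q ∈ Set.Icc (0:ℝ) 1
  | 0, q => by
      simp only [vseq]; split <;> norm_num
  | n+1, q => Δop_mem δ dist T (vseq_mem n) q

lemma vseq_succ_mono {v w : Q → ℝ} (h : ∀ q, v q ≤ w q)
    (hw : ∀ q, w q ∈ Set.Icc (0:ℝ) 1) :
    ∀ q, Δop δ dist T v q ≤ Δop δ dist T w q := Δop_mono δ dist T h hw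

lemma vseq_mono : ∀ (n : ℕ) (q : Q), vseq δ dist T n q ≤ vseq δ dist T (n+1) q
  | 0, q => by
      by_cases hq : q = T
      · simp only [vseq, Δop, hq, if_pos rfl]; exact le_rfl
      · simp only [vseq, Δop, if_neg hq]
        exact (Δop_mem δ dist T (vseq_mem δ dist T 0) q).1.trans (by
          simp only [Δop, if_neg hq]; exact le_rfl)
  | n+1, q =>
      Δop_mono δ dist T (vseq_mono n) (vseq_mem δ dist T (n+1)) q

lemma vseq_le_of_le {n k : ℕ} (h : n ≤ k) (q : Q) :
    vseq δ dist T n q ≤ vseq δ dist T k q := by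
  induction k with
  | zero => simp_all
  | succ k ih =>
    rcases Nat.lt_or_ge n (k+1) with hlt | hge
    · exact (ih (Nat.lt_succ_iff.mp hlt)).trans (vseq_mono δ dist T k q)
    · have : n = k+1 := le_antisymm h hge
      rw [this]

lemma bdd_vseq (q : Q) : BddAbove (Set.range fun n => vseq δ dist T n q) :=
  ⟨1, by rintro x ⟨n, rfl⟩; exact (vseq_mem δ dist T n q).2⟩

lemma vseq_le_visup (n : ℕ) (q : Q) :
    vseq δ dist T n q ≤ ⨆ k, vseq δ dist T k q :=
  le_ciSup (bdd_vseq δ dist T q) n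

lemma visup_mem (q : Q) : (⨆ k, vseq δ dist T k q) ∈ Set.Icc (0:ℝ) 1 :=
  ⟨(vseq_mem δ dist T 0 q).1.trans (vseq_le_visup δ dist T 0 q),
   ciSup_le fun n => (vseq_mem δ dist T n q).2⟩

lemma visup_fix : Δop δ dist T (fun q => ⨆ k, vseq δ dist T k q) =
    fun q => ⨆ k, vseq δ dist T k q := by
  funext q
  refine le_antisymm ?_ ?_
  · refine le_of_forall_pos_le_add fun ε hε => ?_
    have hN : ∀ q' : Q, ∃ n, (⨆ k, vseq δ dist T k q') - ε < vseq δ dist T n q' := by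
      intro q'
      refine exists_lt_of_lt_ciSup ?_
      exact sub_lt_self _ hε
    choose nf hnf using hN
    classical
    set N := Finset.univ.sup nf with hNdef
    have hvN : ∀ q', (⨆ k, vseq δ dist T k q') ≤ vseq δ dist T N q' + ε := by
      intro q'
      have h1 := (hnf q').le
      have h2 : vseq δ dist T (nf q') q' ≤ vseq δ dist T N q' :=
        vseq_le_of_le δ dist T (Finset.le_sup (mem_univ q')) q'
      linarith
    calc Δop δ dist T (fun q => ⨆ k, vseq δ dist T k q) q
        ≤ Δop δ dist T (vseq δ dist T N) q + ε :=
          Δop_le_add δ dist T hε.le hvN (vseq_mem δ dist T N) q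
      _ = vseq δ dist T (N+1) q + ε := rfl
      _ ≤ (⨆ k, vseq δ dist T k q) + ε :=
          add_le_add (vseq_le_visup δ dist T (N+1) q) le_rfl
  · refine ciSup_le fun n => ?_
    match n with
    | 0 =>
      by_cases hq : q = T
      · simp only [vseq, Δop, hq, if_pos rfl]; exact le_rfl
      · simp only [vseq, if_neg hq]
        exact (Δop_mem δ dist T (fun q' => visup_mem δ dist T q') q).1
    | n+1 =>
      exact Δop_mono δ dist T (fun q' => vseq_le_visup δ dist T n q')
        (fun q' => visup_mem δ dist T q') q

lemma vseq_le_value (n : ℕ) (q : Q) : vseq δ dist T n q ≤ value δ dist T q := by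
  classical
  have main : ∀ ε : ℝ, 0 < ε → vseq δ dist T n q ≤ value δ dist T q + n * ε := by
    intro ε hε
    have hch : ∀ (j : ℕ) (q' : Q), ∃ σA : FDist A,
        valGF (locPay δ dist (vseq δ dist T j) q') - ε ≤
          valStratGF (locPay δ dist (vseq δ dist T j) q') σA := by
      intro j q'
      have h1 : valGF (locPay δ dist (vseq δ dist T j) q') - ε <
          ⨆ σA : FDist A, valStratGF (locPay δ dist (vseq δ dist T j) q') σA := by
        have : valGF (locPay δ dist (vseq δ dist T j) q') - ε <
            valGF (locPay δ dist (vseq δ dist T j) q') := sub_lt_self _ hε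
        exact this
      obtain ⟨σA, hσA⟩ := exists_lt_of_lt_ciSup h1
      exact ⟨σA, hσA.le⟩
    choose σf hσf using hch
    set sAε : Strat Q A := fun h q' => σf (n - 1 - h.length) q' with hsAε
    have haux : ∀ (k : ℕ), k ≤ n → ∀ (h : List Q) (q' : Q) (sB : Strat Q B),
        h.length = n - k →
        vseq δ dist T k q' - k * ε ≤ reachSetNAux δ dist {T} k sAε sB h q' := by
      intro k
      induction k with
      | zero =>
        intro _ h q' sB _
        simp only [reachSetNAux, vseq, Nat.cast_zero, zero_mul, sub_zero]
        by_cases hq' : q' = T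
        · rw [if_pos hq', if_pos (by simp [hq'])]
        · rw [if_neg hq', if_neg (by simpa using hq')]
      | succ k ih =>
        intro hkn h q' sB hlen
        simp only [reachSetNAux]
        by_cases hq' : q' = T
        · rw [if_pos (by simp [hq'])]
          have h1 : vseq δ dist T (k+1) q' = 1 := by
            simp [vseq, Δop, hq']
          rw [h1]
          have : (0:ℝ) ≤ (k+1 : ℕ) * ε := by positivity
          linarith
        · rw [if_neg (by simpa using hq')]
          have hstep : ∀ q'', vseq δ dist T k q'' - k * ε ≤
              reachSetNAux δ dist {T} k sAε sB (h ++ [q']) q'' := by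
            intro q''
            refine ih (Nat.le_of_succ_le hkn) (h ++ [q']) q'' sB ?_
            simp only [List.length_append, List.length_singleton, hlen]
            omega
          have hplay : sAε h q' = σf k q' := by
            show σf (n - 1 - h.length) q' = σf k q'
            have : n - 1 - h.length = k := by omega
            rw [this]
          have hv1 : vseq δ dist T (k+1) q' =
              valGF (locPay δ dist (vseq δ dist T k) q') := by
            simp only [vseq, Δop, if_neg hq']; rfl
          have e1 : ∑ q'', step δ dist (σf k q') (sB h q') q' q'' *
                (vseq δ dist T k q'' - k * ε)
              = (∑ q'', step δ dist (σf k q') (sB h q') q' q'' *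
                  vseq δ dist T k q'') - k * ε := by
            simp only [mul_sub, Finset.sum_sub_distrib, ← Finset.sum_mul]
            rw [step_sum_one δ dist _ _ q', one_mul]
          calc vseq δ dist T (k+1) q' - (k+1 : ℕ) * ε
              = (valGF (locPay δ dist (vseq δ dist T k) q') - ε) - k * ε := by
                rw [hv1]; push_cast; ring
            _ ≤ valStratGF (locPay δ dist (vseq δ dist T k) q') (σf k q') - k * ε := by
                linarith [hσf k q']
            _ ≤ out (locPay δ dist (vseq δ dist T k) q') (σf k q') (sB h q') - k * ε := by
                linarith [valStrat_le_out (locPay δ dist (vseq δ dist T k) q')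
                  (σf k q') (sB h q')]
            _ = (∑ q'', step δ dist (σf k q') (sB h q') q' q'' *
                  vseq δ dist T k q'') - k * ε := by
                rw [step_mul_sum]
            _ = ∑ q'', step δ dist (σf k q') (sB h q') q' q'' *
                  (vseq δ dist T k q'' - k * ε) := e1.symm
            _ ≤ ∑ q'', step δ dist (σf k q') (sB h q') q' q'' *
                  reachSetNAux δ dist {T} k sAε sB (h ++ [q']) q'' :=
                Finset.sum_le_sum fun q'' _ =>
                  mul_le_mul_of_nonneg_left (hstep q'') (step_nonneg δ dist _ _ _ _)
            _ = ∑ q'', step δ dist (sAε h q') (sB h q') q' q'' *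
                  reachSetNAux δ dist {T} k sAε sB (h ++ [q']) q'' := by
                rw [hplay]
    have hfin : ∀ sB : Strat Q B,
        vseq δ dist T n q - n * ε ≤ reach δ dist T sAε sB q := by
      intro sB
      have h1 := haux n le_rfl [] q sB (by simp)
      exact h1.trans (reachN_le_reach δ dist T n sAε sB q)
    have h2 : vseq δ dist T n q - n * ε ≤ valA δ dist T sAε q :=
      le_ciInf fun sB => hfin sB
    have h3 := h2.trans (valA_le_value δ dist T sAε q)
    linarith
  refine le_of_forall_pos_le_add fun ε hε => ?_
  have h1 := main (ε / (n+1)) (by positivity)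
  have h2 : (n : ℝ) * (ε / (n+1)) ≤ ε := by
    rw [mul_div_assoc']
    rw [div_le_iff₀ (by positivity)]
    have : (0:ℝ) ≤ ε := hε.le
    nlinarith [Nat.cast_nonneg (α := ℝ) n]
  linarith

lemma m_le_value (m : Q → ℝ) (hm : CRG.IsLfpDelta δ dist T m) (q : Q) :
    m q ≤ value δ dist T q := by
  have h1 := hm.2.2 (fun q' => ⨆ k, vseq δ dist T k q')
    (fun q' => visup_mem δ dist T q') (visup_fix δ dist T) q
  exact h1.trans (ciSup_le fun n => vseq_le_value δ dist T n q)

lemma value_eq_m (m : Q → ℝ) (hm : CRG.IsLfpDelta δ dist T m) (q : Q) :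
    value δ dist T q = m q :=
  le_antisymm (value_le_m δ dist T m hm q) (m_le_value δ dist T m hm q)

end Aux5
/-- an optimal Player A strategy plays, along every relevant path, local
strategies that are optimal in the local interaction, and its residual strategies
remain optimal from every state reachable through an optimal Player B action. -/
theorem stmt15
    {A B Q D : Type} [Fintype A] [Fintype B] [Fintype Q] [Fintype D]
    [Nonempty A] [Nonempty B] [Nonempty Q] [Nonempty D] [DecidableEq Q] [DecidableEq B]
    (δ : Q → A → B → D) (dist : D → FDist Q) (T : Q)
    (habs : CRG.Absorbing δ dist T)
    (m : Q → ℝ) (hm : CRG.IsLfpDelta δ dist T m)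
    (sA : CRG.Strat Q A) (q₀ : Q)
    (hopt : CRG.valA δ dist T sA q₀ = CRG.value δ dist T q₀) :
    ∀ (h : List Q) (q' : Q), CRG.Relevant δ dist m sA q₀ h q' →
      sA h q' ∈ CRG.OptA (CRG.locPay δ dist m q') ∧
      ∀ b ∈ CRG.optActs (CRG.locPay δ dist m q') (sA h q'),
        ∀ q'' : Q, 0 < CRG.step δ dist (sA h q') (CRG.dirac b) q' q'' →
          CRG.valA δ dist T (CRG.residual sA (h ++ [q'])) q'' =
            CRG.value δ dist T q'' := by
  open CRG Finset in
  have hmem := hm.1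
  have hfix := hm.2.1
  have hval_eq : ∀ q, value δ dist T q = m q := value_eq_m δ dist T m hm
  have hmT : m T = 1 := by
    have h := congrFun hfix T
    simpa [Δop] using h.symm
  have hGFne : ∀ q, q ≠ T → valGF (locPay δ dist m q) = m q := by
    intro q hq
    have h := congrFun hfix q
    exact (by simpa [Δop, hq] using h : valGF (fun a b => lift dist m (δ q a b)) = m q)
  have hpayT : ∀ a b, locPay δ dist m T a b = 1 := by
    intro a b
    show lift dist m (δ T a b) = 1
    unfold lift
    simp only [habs a b]
    rw [Finset.sum_eq_single T]
    · rw [if_pos rfl, one_mul, hmT]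
    · intro q _ hq; rw [if_neg hq, zero_mul]
    · intro hT; exact absurd (mem_univ T) hT
  have hGF : ∀ q, valGF (locPay δ dist m q) = m q := by
    intro q
    by_cases hq : q = T
    · subst hq
      rw [const_one_valGF hpayT, hmT]
    · exact hGFne q hq
  have hpaymem : ∀ q, ∀ a b, locPay δ dist m q a b ∈ Set.Icc (0:ℝ) 1 :=
    fun q a b => lift_mem dist hmem _
  -- the main consequences of residual optimality at (h, q)
  have main : ∀ (h : List Q) (q : Q), valA δ dist T (residual sA h) q = m q →
      valStratGF (locPay δ dist m q) (sA h q) = m q ∧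
      ∀ b ∈ optActs (locPay δ dist m q) (sA h q), ∀ q'' : Q,
        0 < step δ dist (sA h q) (dirac b) q q'' →
          valA δ dist T (residual sA (h ++ [q])) q'' = m q'' := by
    intro h q hval
    by_cases hq : q = T
    · have hpayq : ∀ a b, locPay δ dist m q a b = 1 := by
        intro a b; rw [hq]; exact hpayT a b
      constructor
      · rw [const_one_valStrat hpayq, hq, hmT]
      · intro b hb q'' hstep
        have hq'' : q'' = T := by
          by_contra hne
          have hd : ∀ (a : A) (b' : B), (dist (δ q a b')).1 q'' = 0 := by
            intro a b'
            rw [hq]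
            simp only [habs a b']
            rw [if_neg hne]
          have hz : step δ dist (sA h q) (dirac b) q q'' = 0 := by
            refine Finset.sum_eq_zero fun a _ => Finset.sum_eq_zero fun b' _ => ?_
            rw [hd a b', mul_zero]
          rw [hz] at hstep
          exact lt_irrefl 0 hstep
        rw [hq'', valA_T δ dist T _, hmT]
    · set t := residual sA h with ht
      have ht0 : t [] q = sA h q := by
        show sA (h ++ []) q = sA h q
        rw [List.append_nil]
      have htres : residual t [q] = residual sA (h ++ [q]) := by
        funext h' q''
        show sA (h ++ ([q] ++ h')) q'' = sA ((h ++ [q]) ++ h') q''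
        rw [List.append_assoc]
      have hub : ∀ q'', valA δ dist T (residual sA (h ++ [q])) q'' ≤ m q'' := fun q'' =>
        (valA_le_value δ dist T _ q'').trans (hval_eq q'').le
      have hkey : ∀ σB : FDist B, m q ≤ out (locPay δ dist m q) (sA h q) σB := by
        intro σB
        have h1 := key_step δ dist T t q hq σB
        rw [hval, ht0, htres] at h1
        calc m q ≤ ∑ q'', step δ dist (sA h q) σB q q'' *
              valA δ dist T (residual sA (h ++ [q])) q'' := h1
          _ ≤ ∑ q'', step δ dist (sA h q) σB q q'' * m q'' :=
              Finset.sum_le_sum fun q'' _ =>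
                mul_le_mul_of_nonneg_left (hub q'') (step_nonneg δ dist _ _ _ _)
          _ = out (locPay δ dist m q) (sA h q) σB := step_mul_sum δ dist _ _ _ _
      have hvs_ge : m q ≤ valStratGF (locPay δ dist m q) (sA h q) :=
        le_ciInf fun σB => hkey σB
      have hvs_le : valStratGF (locPay δ dist m q) (sA h q) ≤ m q :=
        (valStrat_le_valGF (hpaymem q) _).trans (hGF q).le
      have hvs : valStratGF (locPay δ dist m q) (sA h q) = m q :=
        le_antisymm hvs_le hvs_ge
      refine ⟨hvs, ?_⟩
      intro b hb q'' hstep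
      have hbeq : outB (locPay δ dist m q) (sA h q) b =
          valStratGF (locPay δ dist m q) (sA h q) := hb
      have hout : ∑ q''', step δ dist (sA h q) (dirac b) q q''' * m q''' = m q := by
        rw [step_mul_sum, out_dirac, hbeq, hvs]
      have hkey2 : m q ≤ ∑ q''', step δ dist (sA h q) (dirac b) q q''' *
          valA δ dist T (residual sA (h ++ [q])) q''' := by
        have h1 := key_step δ dist T t q hq (dirac b)
        rw [hval, ht0, htres] at h1
        exact h1
      have hterm : ∀ q''', step δ dist (sA h q) (dirac b) q q''' *
          valA δ dist T (residual sA (h ++ [q])) q''' =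
            step δ dist (sA h q) (dirac b) q q''' * m q''' := by
        have hle : ∀ q''' ∈ Finset.univ, step δ dist (sA h q) (dirac b) q q''' *
            valA δ dist T (residual sA (h ++ [q])) q''' ≤
              step δ dist (sA h q) (dirac b) q q''' * m q''' := fun q''' _ =>
          mul_le_mul_of_nonneg_left (hub q''') (step_nonneg δ dist _ _ _ _)
        intro q'''
        by_contra hne
        have hlt : step δ dist (sA h q) (dirac b) q q''' *
            valA δ dist T (residual sA (h ++ [q])) q''' <
              step δ dist (sA h q) (dirac b) q q''' * m q''' :=
          lt_of_le_of_ne (hle q''' (mem_univ _)) hne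
        have hsl := Finset.sum_lt_sum hle ⟨q''', mem_univ _, hlt⟩
        rw [hout] at hsl
        linarith [hkey2]
      have h2 := hterm q''
      exact mul_left_cancel₀ (ne_of_gt hstep) h2
  -- the invariant along relevant paths
  have inv : ∀ (h : List Q) (q : Q), Relevant δ dist m sA q₀ h q →
      valA δ dist T (residual sA h) q = m q := by
    intro h q hrel
    induction hrel with
    | base =>
      have hr : residual sA [] = sA := rfl
      rw [hr, hopt, hval_eq]
    | @step h' q1 q2 _ hex ih =>
      obtain ⟨b, hbopt, hbstep⟩ := hex
      exact (main h' q1 ih).2 b hbopt q2 hbstep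
  intro h q' hrel
  have hv := inv h q' hrel
  obtain ⟨h1, h2⟩ := main h q' hv
  constructor
  · show valStratGF (locPay δ dist m q') (sA h q') = valGF (locPay δ dist m q')
    rw [h1, hGF]
  · intro b hb q'' hstep
    rw [hval_eq q'']
    exact h2 b hb q'' hstep
end
end

section
/- In a finite concurrent reachability game, let v₀ ∈ [0,1]^Q be defined by v₀(⊤) = 1 and v₀(q) = 0 for q ≠ ⊤, and set v_{n+1} := Δ(v_n) for all n ∈ ℕ. Then the sequence (v_n) converges in the supremum norm, and its limit is m, the least fixed point of Δ on V = { v ∈ [0,1]^Q : v(⊤) = 1 }. -/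
open scoped BigOperators Classical

noncomputable section

namespace CRGaux

open CRG

variable {A B Q D : Type} [Fintype A] [Fintype B] [Fintype Q] [Fintype D]

instance instNE {X : Type} [Fintype X] [Nonempty X] : Nonempty (FDist X) :=
  ⟨dirac (Classical.arbitrary X)⟩

lemma out_le_out {u u' : A → B → ℝ} (h : ∀ a b, u a b ≤ u' a b)
    (σA : FDist A) (σB : FDist B) : out u σA σB ≤ out u' σA σB := by
  refine Finset.sum_le_sum fun a _ => Finset.sum_le_sum fun b _ => ?_
  exact mul_le_mul_of_nonneg_left (h a b) (mul_nonneg (σA.2.1 a) (σB.2.1 b))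

lemma out_const (c : ℝ) (σA : FDist A) (σB : FDist B) :
    out (fun _ _ => c) σA σB = c := by
  have hB : ∑ b, σB.1 b * c = c := by rw [← Finset.sum_mul, σB.2.2, one_mul]
  have : ∀ a, ∑ b, σA.1 a * σB.1 b * c = σA.1 a * c := by
    intro a
    simp only [mul_assoc, ← Finset.mul_sum, hB]
  simp only [out, this]
  rw [← Finset.sum_mul, σA.2.2, one_mul]

lemma out_le {u : A → B → ℝ} {c : ℝ} (h : ∀ a b, u a b ≤ c)
    (σA : FDist A) (σB : FDist B) : out u σA σB ≤ c := by
  have := out_le_out (u' := fun _ _ => c) h σA σB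
  rwa [out_const] at this

lemma le_out {u : A → B → ℝ} {c : ℝ} (h : ∀ a b, c ≤ u a b)
    (σA : FDist A) (σB : FDist B) : c ≤ out u σA σB := by
  have := out_le_out (u := fun _ _ => c) (fun a b => h a b) σA σB
  rwa [out_const] at this

lemma out_add (u w : A → B → ℝ) (σA : FDist A) (σB : FDist B) :
    out (fun a b => u a b + w a b) σA σB = out u σA σB + out w σA σB := by
  simp only [out, mul_add, Finset.sum_add_distrib]

lemma out_le_add {u u' : A → B → ℝ} {c : ℝ} (h : ∀ a b, u a b ≤ u' a b + c)
    (σA : FDist A) (σB : FDist B) : out u σA σB ≤ out u' σA σB + c := by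
  have := out_le_out (u' := fun a b => u' a b + c) h σA σB
  rwa [out_add, out_const] at this

variable [Nonempty A] [Nonempty B]

lemma bddBelow_out {u : A → B → ℝ} (hlo : ∀ a b, (0:ℝ) ≤ u a b) (σA : FDist A) :
    BddBelow (Set.range (out u σA)) := by
  refine ⟨0, ?_⟩
  rintro _ ⟨σB, rfl⟩
  exact le_out hlo _ _

lemma le_valStratGF {u : A → B → ℝ} (hlo : ∀ a b, (0:ℝ) ≤ u a b) (σA : FDist A) :
    0 ≤ valStratGF u σA :=
  le_ciInf fun σB => le_out hlo _ _

lemma valStratGF_le {u : A → B → ℝ} {c : ℝ} (hlo : ∀ a b, (0:ℝ) ≤ u a b)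
    (hup : ∀ a b, u a b ≤ c) (σA : FDist A) : valStratGF u σA ≤ c :=
  ciInf_le_of_le (bddBelow_out hlo σA) (Classical.arbitrary _) (out_le hup _ _)

lemma valStratGF_mono {u u' : A → B → ℝ} (hlo : ∀ a b, (0:ℝ) ≤ u a b)
    (h : ∀ a b, u a b ≤ u' a b) (σA : FDist A) :
    valStratGF u σA ≤ valStratGF u' σA :=
  ciInf_mono (bddBelow_out hlo σA) fun σB => out_le_out h σA σB

lemma valStratGF_le_add {u u' : A → B → ℝ} {c : ℝ} (hlo : ∀ a b, (0:ℝ) ≤ u a b)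
    (h : ∀ a b, u a b ≤ u' a b + c) (σA : FDist A) :
    valStratGF u σA ≤ valStratGF u' σA + c := by
  have key : valStratGF u σA - c ≤ valStratGF u' σA := by
    refine le_ciInf fun σB => ?_
    have h1 : valStratGF u σA ≤ out u σA σB := ciInf_le (bddBelow_out hlo σA) σB
    have h2 := out_le_add h σA σB
    linarith
  linarith

lemma bddAbove_valStrat {u : A → B → ℝ} {hi : ℝ} (hlo : ∀ a b, (0:ℝ) ≤ u a b)
    (hup : ∀ a b, u a b ≤ hi) : BddAbove (Set.range (valStratGF u)) := by
  refine ⟨hi, ?_⟩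
  rintro _ ⟨σA, rfl⟩
  exact valStratGF_le hlo hup σA

lemma le_valGF {u : A → B → ℝ} (hlo : ∀ a b, (0:ℝ) ≤ u a b)
    (hup : ∀ a b, u a b ≤ 1) : 0 ≤ valGF u :=
  le_ciSup_of_le (bddAbove_valStrat hlo hup) (Classical.arbitrary _)
    (le_valStratGF hlo _)

lemma valGF_le {u : A → B → ℝ} {c : ℝ} (hlo : ∀ a b, (0:ℝ) ≤ u a b)
    (hup : ∀ a b, u a b ≤ c) : valGF u ≤ c :=
  ciSup_le fun σA => valStratGF_le hlo hup σA

lemma valGF_mono {u u' : A → B → ℝ} {hi : ℝ} (hlo : ∀ a b, (0:ℝ) ≤ u a b)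
    (hlo' : ∀ a b, (0:ℝ) ≤ u' a b) (hup' : ∀ a b, u' a b ≤ hi)
    (h : ∀ a b, u a b ≤ u' a b) : valGF u ≤ valGF u' :=
  ciSup_mono (bddAbove_valStrat hlo' hup') fun σA => valStratGF_mono hlo h σA

lemma valGF_le_add {u u' : A → B → ℝ} {c hi : ℝ} (hlo : ∀ a b, (0:ℝ) ≤ u a b)
    (hlo' : ∀ a b, (0:ℝ) ≤ u' a b) (hup' : ∀ a b, u' a b ≤ hi)
    (h : ∀ a b, u a b ≤ u' a b + c) : valGF u ≤ valGF u' + c := by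
  refine ciSup_le fun σA => ?_
  have h1 := valStratGF_le_add hlo h σA
  have h2 : valStratGF u' σA ≤ valGF u' :=
    le_ciSup (bddAbove_valStrat hlo' hup') σA
  linarith

/-! Lift lemmas. -/

lemma lift_nonneg {dist : D → FDist Q} {v : Q → ℝ} (hv : ∀ q, 0 ≤ v q) (d : D) :
    0 ≤ lift dist v d :=
  Finset.sum_nonneg fun q _ => mul_nonneg ((dist d).2.1 q) (hv q)

lemma lift_const (dist : D → FDist Q) (c : ℝ) (d : D) :
    lift dist (fun _ => c) d = c := by
  simp only [lift]
  rw [← Finset.sum_mul, (dist d).2.2, one_mul]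

lemma lift_mono {dist : D → FDist Q} {v v' : Q → ℝ} (h : ∀ q, v q ≤ v' q) (d : D) :
    lift dist v d ≤ lift dist v' d :=
  Finset.sum_le_sum fun q _ => mul_le_mul_of_nonneg_left (h q) ((dist d).2.1 q)

lemma lift_le {dist : D → FDist Q} {v : Q → ℝ} {c : ℝ} (h : ∀ q, v q ≤ c) (d : D) :
    lift dist v d ≤ c := by
  have := lift_mono (dist := dist) (v' := fun _ => c) h d
  rwa [lift_const] at this

lemma lift_le_add {dist : D → FDist Q} {v v' : Q → ℝ} {c : ℝ}
    (h : ∀ q, v q ≤ v' q + c) (d : D) : lift dist v d ≤ lift dist v' d + c := by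
  have h1 := lift_mono (dist := dist) (v' := fun q => v' q + c) h d
  have h2 : lift dist (fun q => v' q + c) d = lift dist v' d + c := by
    simp only [lift, mul_add, Finset.sum_add_distrib]
    rw [← Finset.sum_mul, (dist d).2.2, one_mul]
  linarith

/-! Δop lemmas. -/

variable {δ : Q → A → B → D} {dist : D → FDist Q} {T : Q}

lemma Δop_nonneg {v : Q → ℝ} (hv : ∀ q, 0 ≤ v q) (hv1 : ∀ q, v q ≤ 1) (q : Q) :
    0 ≤ Δop δ dist T v q := by
  unfold Δop
  split
  · norm_num
  · exact le_valGF (fun a b => lift_nonneg hv _) (fun a b => lift_le hv1 _)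

lemma Δop_le_one {v : Q → ℝ} (hv : ∀ q, 0 ≤ v q) (hv1 : ∀ q, v q ≤ 1) (q : Q) :
    Δop δ dist T v q ≤ 1 := by
  unfold Δop
  split
  · norm_num
  · exact valGF_le (fun a b => lift_nonneg hv _) (fun a b => lift_le hv1 _)

lemma Δop_mono {v v' : Q → ℝ} (hv : ∀ q, 0 ≤ v q) (hv' : ∀ q, 0 ≤ v' q)
    (hv'1 : ∀ q, v' q ≤ 1) (h : ∀ q, v q ≤ v' q) (q : Q) :
    Δop δ dist T v q ≤ Δop δ dist T v' q := by
  unfold Δop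
  split
  · norm_num
  · exact valGF_mono (fun a b => lift_nonneg hv _) (fun a b => lift_nonneg hv' _)
      (fun a b => lift_le hv'1 _) (fun a b => lift_mono h _)

lemma Δop_le_add {v v' : Q → ℝ} {c : ℝ} (hc : 0 ≤ c) (hv : ∀ q, 0 ≤ v q)
    (hv' : ∀ q, 0 ≤ v' q) (hv'1 : ∀ q, v' q ≤ 1) (h : ∀ q, v q ≤ v' q + c) (q : Q) :
    Δop δ dist T v q ≤ Δop δ dist T v' q + c := by
  unfold Δop
  split
  · linarith
  · exact valGF_le_add (fun a b => lift_nonneg hv _) (fun a b => lift_nonneg hv' _)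
      (fun a b => lift_le hv'1 _) (fun a b => lift_le_add h _)

end CRGaux

/-- the iterates of Δ starting from the indicator of the target converge
to `m`, the least fixed point of Δ on `V`. -/
theorem stmt17
    {A B Q D : Type} [Fintype A] [Fintype B] [Fintype Q] [Fintype D]
    [Nonempty A] [Nonempty B] [Nonempty Q] [Nonempty D] [DecidableEq Q]
    (δ : Q → A → B → D) (dist : D → FDist Q) (T : Q)
    (habs : CRG.Absorbing δ dist T)
    (m : Q → ℝ) (hm : CRG.IsLfpDelta δ dist T m) (hmT : m T = 1) :
    Filter.Tendsto (CRG.vseq δ dist T) Filter.atTop (nhds m) := by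
  classical
  obtain ⟨hm01, hmfix, hmleast⟩ := hm
  set v : ℕ → Q → ℝ := CRG.vseq δ dist T with hv
  have hm0 : ∀ q, 0 ≤ m q := fun q => (hm01 q).1
  have hm1 : ∀ q, m q ≤ 1 := fun q => (hm01 q).2
  -- bounds on v n
  have hb : ∀ n, (∀ q, 0 ≤ v n q) ∧ (∀ q, v n q ≤ m q) := by
    intro n
    induction n with
    | zero =>
      constructor <;> intro q <;> simp only [hv, CRG.vseq]
      · split <;> norm_num
      · split
        · next h => rw [h, hmT]
        · exact hm0 q
    | succ n ih =>
      obtain ⟨ih0, ihm⟩ := ih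
      have ih1 : ∀ q, v n q ≤ 1 := fun q => le_trans (ihm q) (hm1 q)
      constructor
      · intro q
        exact CRGaux.Δop_nonneg ih0 ih1 q
      · intro q
        have := CRGaux.Δop_mono (δ := δ) (dist := dist) (T := T) ih0 hm0 hm1 ihm q
        rwa [hmfix] at this
  have hb0 : ∀ n q, 0 ≤ v n q := fun n => (hb n).1
  have hbm : ∀ n q, v n q ≤ m q := fun n => (hb n).2
  have hb1 : ∀ n q, v n q ≤ 1 := fun n q => le_trans (hbm n q) (hm1 q)
  -- monotonicity in n
  have hstep : ∀ n q, v n q ≤ v (n + 1) q := by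
    intro n
    induction n with
    | zero =>
      intro q
      simp only [hv, CRG.vseq, CRG.Δop]
      split
      · norm_num
      · exact CRGaux.le_valGF (fun a b => CRGaux.lift_nonneg (hb0 0) _)
          (fun a b => CRGaux.lift_le (hb1 0) _)
    | succ n ih =>
      intro q
      exact CRGaux.Δop_mono (hb0 n) (hb0 (n + 1)) (hb1 (n + 1)) ih q
  have hmono : ∀ q, Monotone fun n => v n q := fun q =>
    monotone_nat_of_le_succ fun n => hstep n q
  -- the limit L
  set L : Q → ℝ := fun q => ⨆ n, v n q with hL
  have hbdd : ∀ q, BddAbove (Set.range fun n => v n q) := by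
    intro q
    exact ⟨m q, by rintro _ ⟨n, rfl⟩; exact hbm n q⟩
  have hvL : ∀ n q, v n q ≤ L q := fun n q => le_ciSup (hbdd q) n
  have hLm : ∀ q, L q ≤ m q := fun q => ciSup_le fun n => hbm n q
  have hL0 : ∀ q, 0 ≤ L q := fun q => le_trans (hb0 0 q) (hvL 0 q)
  have hL1 : ∀ q, L q ≤ 1 := fun q => le_trans (hLm q) (hm1 q)
  -- L is a fixed point of Δop
  have hfixL : CRG.Δop δ dist T L = L := by
    funext q
    apply le_antisymm
    · -- Δop L q ≤ L q, via ε-argument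
      refine le_of_forall_pos_le_add fun ε hε => ?_
      -- find uniform n with L q' ≤ v n q' + ε
      have hex : ∀ q' : Q, ∃ n, L q' - ε < v n q' := by
        intro q'
        have : L q' - ε < L q' := by linarith
        exact exists_lt_of_lt_ciSup this
      choose nq hnq using hex
      set N := Finset.univ.sup nq with hN
      have hNle : ∀ q' : Q, L q' ≤ v N q' + ε := by
        intro q'
        have h1 : nq q' ≤ N := Finset.le_sup (Finset.mem_univ q')
        have h2 : v (nq q') q' ≤ v N q' := hmono q' h1
        have := hnq q'
        linarith
      have h3 := CRGaux.Δop_le_add (δ := δ) (dist := dist) (T := T) (le_of_lt hε) hL0 (hb0 N) (hb1 N) hNle q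
      have h4 : CRG.Δop δ dist T (v N) q = v (N + 1) q := rfl
      have h5 : v (N + 1) q ≤ L q := hvL (N + 1) q
      linarith
    · -- L q ≤ Δop L q
      refine ciSup_le fun n => ?_
      have h1 : v n q ≤ v (n + 1) q := hstep n q
      have h2 : v (n + 1) q = CRG.Δop δ dist T (v n) q := rfl
      have h3 : CRG.Δop δ dist T (v n) q ≤ CRG.Δop δ dist T L q :=
        CRGaux.Δop_mono (hb0 n) hL0 hL1 (fun q' => hvL n q') q
      linarith
  -- hence L = m
  have hLeq : L = m := by
    funext q
    exact le_antisymm (hLm q) (hmleast L (fun q' => ⟨hL0 q', hL1 q'⟩) hfixL q)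
  -- convergence
  rw [tendsto_pi_nhds]
  intro q
  have : Filter.Tendsto (fun n => v n q) Filter.atTop (nhds (L q)) :=
    tendsto_atTop_ciSup (hmono q) (hbdd q)
  rwa [hLeq] at this
end
end
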